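/- arXiv:2309.07363 — 7 statements merged into one kernel-verified Lean document; each statement's English description precedes it below -/
import Mathlib

section
/- Let Z be a finite nonempty set, c : Z × Z → ℝ a cost function, and p, q ∈ Δ(Z). If the diagonal D = {(z,z) : z ∈ Z} is c-cyclically monotone, then there exists a c-optimal coupling γ of p and q such that 1 − Σ_{z∈Z} γ(z,z) ≤ (|Z| − 1)·‖q − p‖. -/
open Finset

/-- `p` is a probability vector on the finite set `Z`. -/
def IsProbVec {Z : Type*} [Fintype Z] (p : Z → ℝ) : Prop :=
  (∀ z, 0 ≤ p z) ∧ ∑ z, p z = 1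

/-- Total variation distance `‖p − q‖ = (1/2)·Σ_z |p z − q z|`. -/
noncomputable def tv {Z : Type*} [Fintype Z] (p q : Z → ℝ) : ℝ :=
  (∑ z, |p z - q z|) / 2

/-- `γ` is a coupling of `p` and `q`. -/
def IsCoupling {X Y : Type*} [Fintype X] [Fintype Y]
    (γ : X → Y → ℝ) (p : X → ℝ) (q : Y → ℝ) : Prop :=
  (∀ x y, 0 ≤ γ x y) ∧ (∀ x, ∑ y, γ x y = p x) ∧ (∀ y, ∑ x, γ x y = q y)

/-- Total transport cost of `γ` under the cost function `c`. -/
noncomputable def transportCost {X Y : Type*} [Fintype X] [Fintype Y]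
    (c : X → Y → ℝ) (γ : X → Y → ℝ) : ℝ :=
  ∑ x, ∑ y, c x y * γ x y

/-- `γ` is a `c`-optimal coupling of `p` and `q`. -/
def IsOptimalCoupling {X Y : Type*} [Fintype X] [Fintype Y]
    (c : X → Y → ℝ) (γ : X → Y → ℝ) (p : X → ℝ) (q : Y → ℝ) : Prop :=
  IsCoupling γ p q ∧
    ∀ γ' : X → Y → ℝ, IsCoupling γ' p q → transportCost c γ ≤ transportCost c γ'

/-- The set `S ⊆ Z × Z` is `c`-cyclically monotone. -/
def CyclMono {Z : Type*} (c : Z → Z → ℝ) (S : Set (Z × Z)) : Prop :=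
  ∀ J : ℕ, ∀ z z' : Fin (J + 2) → Z, (∀ j, (z j, z' j) ∈ S) →
    ∑ j, c (z j) (z' j) ≤ ∑ j, c (z j) (z' (j + 1))

noncomputable def ee {Z : Type*} [DecidableEq Z] (a b : Z) : ℝ := if a = b then 1 else 0

section AUX
variable {Z : Type*} [Fintype Z] [DecidableEq Z]

omit [Fintype Z] in
lemma ee_nonneg (a b : Z) : 0 ≤ ee a b := by unfold ee; split <;> norm_num

lemma sum_ee (t : Z) : ∑ x, ee x t = 1 := by simp [ee]

lemma sum_ee_mul (t : Z) (g : Z → ℝ) : ∑ x, ee x t * g x = g t := by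
  simp [ee, ite_mul]

lemma cycle_improve (c : Z → Z → ℝ) (p q : Z → ℝ) (γ : Z → Z → ℝ)
    (hγ : IsCoupling γ p q) (J : ℕ) (w : Fin (J+2) → Z)
    (hpos : ∀ i, 0 < γ (w i) (w (i+1))) (hne : ∀ i, w i ≠ w (i+1))
    (hdiag : CyclMono c {zz : Z × Z | zz.1 = zz.2}) :
    ∃ γ' : Z → Z → ℝ, IsCoupling γ' p q ∧ transportCost c γ' ≤ transportCost c γ ∧
      ∑ x, γ x x < ∑ x, γ' x x := by
  have hm0 : (0:ℝ) < ((J:ℝ) + 2) := by positivity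
  set δ : ℝ := Finset.inf' univ ⟨0, mem_univ 0⟩ (fun i : Fin (J+2) => γ (w i) (w (i+1))) with hδ
  have hδpos : 0 < δ := (Finset.lt_inf'_iff _).mpr (fun i _ => hpos i)
  set ε : ℝ := δ / ((J:ℝ) + 2) with hε
  have hεpos : 0 < ε := div_pos hδpos hm0
  set B : Z → Z → ℝ := fun x y => ∑ i, ee x (w i) * ee y (w i) with hB
  set A : Z → Z → ℝ := fun x y => ∑ i, ee x (w i) * ee y (w (i+1)) with hA
  set γ' : Z → Z → ℝ := fun x y => γ x y + ε * (B x y - A x y) with hγ'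
  have hAdiag : ∀ x, A x x = 0 := by
    intro x
    refine Finset.sum_eq_zero fun i _ => ?_
    by_cases h1 : x = w i
    · by_cases h2 : x = w (i+1)
      · exact absurd (h1 ▸ h2 ▸ rfl : w i = w (i+1)) (hne i)
      · simp [ee, h2]
    · simp [ee, h1]
  have hBood : ∀ x y, x ≠ y → B x y = 0 := by
    intro x y hxy
    refine Finset.sum_eq_zero fun i _ => ?_
    by_cases h1 : x = w i
    · have : ¬ y = w i := fun h => hxy (h1.trans h.symm)
      simp [ee, this]
    · simp [ee, h1]
  have hBdiag : ∀ x, B x x = ∑ i, ee x (w i) := by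
    intro x
    refine Finset.sum_congr rfl fun i _ => ?_
    by_cases h1 : x = w i <;> simp [ee, h1]
  have hAle : ∀ x y, A x y ≤ (J:ℝ) + 2 := by
    intro x y
    calc A x y ≤ ∑ _i : Fin (J+2), (1:ℝ) := by
          refine Finset.sum_le_sum fun i _ => ?_
          unfold ee; split <;> split <;> norm_num
      _ = (J:ℝ) + 2 := by simp
  have hAnn : ∀ x y, 0 ≤ A x y :=
    fun x y => Finset.sum_nonneg fun i _ => mul_nonneg (ee_nonneg _ _) (ee_nonneg _ _)
  have hBnn : ∀ x y, 0 ≤ B x y :=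
    fun x y => Finset.sum_nonneg fun i _ => mul_nonneg (ee_nonneg _ _) (ee_nonneg _ _)
  have key : ∀ (u v : Fin (J+2) → Z) (g : Z → Z → ℝ),
      ∑ x, ∑ y, g x y * (∑ i, ee x (u i) * ee y (v i)) = ∑ i, g (u i) (v i) := by
    intro u v g
    have inner : ∀ x, ∑ y, g x y * (∑ i, ee x (u i) * ee y (v i))
        = ∑ i, ee x (u i) * g x (v i) := by
      intro x
      rw [show (∑ y, g x y * (∑ i, ee x (u i) * ee y (v i)))
          = ∑ y, ∑ i, ee x (u i) * (ee y (v i) * g x y) from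
        Finset.sum_congr rfl fun y _ => by
          rw [Finset.mul_sum]; exact Finset.sum_congr rfl fun i _ => by ring]
      rw [Finset.sum_comm]
      refine Finset.sum_congr rfl fun i _ => ?_
      rw [← Finset.mul_sum, sum_ee_mul]
    simp only [inner]
    rw [Finset.sum_comm]
    exact Finset.sum_congr rfl fun i _ => sum_ee_mul (u i) (fun x => g x (v i))
  have hBrow : ∀ x, ∑ y, B x y = ∑ i, ee x (w i) := by
    intro x
    rw [Finset.sum_comm]
    exact Finset.sum_congr rfl fun i _ => by rw [← Finset.mul_sum, sum_ee, mul_one]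
  have hArow : ∀ x, ∑ y, A x y = ∑ i, ee x (w i) := by
    intro x
    rw [Finset.sum_comm]
    exact Finset.sum_congr rfl fun i _ => by rw [← Finset.mul_sum, sum_ee, mul_one]
  have hBcol : ∀ y, ∑ x, B x y = ∑ i, ee y (w i) := by
    intro y
    rw [Finset.sum_comm]
    exact Finset.sum_congr rfl fun i _ => by rw [← Finset.sum_mul, sum_ee, one_mul]
  have hAcol : ∀ y, ∑ x, A x y = ∑ i, ee y (w i) := by
    intro y
    rw [Finset.sum_comm]
    have : ∀ i : Fin (J+2), ∑ x, ee x (w i) * ee y (w (i+1)) = ee y (w (i+1)) := by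
      intro i; rw [← Finset.sum_mul, sum_ee, one_mul]
    simp only [this]
    exact Fintype.sum_equiv (Equiv.addRight (1 : Fin (J+2))) _ _ (fun i => rfl)
  refine ⟨γ', ⟨?_, ?_, ?_⟩, ?_, ?_⟩
  · intro x y
    by_cases hxy : x = y
    · subst hxy
      simp only [hγ', hAdiag]
      nlinarith [hγ.1 x x, hBnn x x]
    · have hB0 : B x y = 0 := hBood x y hxy
      by_cases hA0 : ∀ i : Fin (J+2), ¬ (x = w i ∧ y = w (i+1))
      · have : A x y = 0 := by
          refine Finset.sum_eq_zero fun i _ => ?_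
          rcases not_and_or.mp (hA0 i) with h | h <;> simp [ee, h]
        simp only [hγ', hB0, this]
        simpa using hγ.1 x y
      · push_neg at hA0
        obtain ⟨i, h1, h2⟩ := hA0
        have hge : δ ≤ γ x y := by
          rw [h1, h2]
          exact Finset.inf'_le _ (mem_univ i)
        have : ε * A x y ≤ δ := by
          calc ε * A x y ≤ ε * ((J:ℝ) + 2) :=
                mul_le_mul_of_nonneg_left (hAle x y) hεpos.le
            _ = δ := by rw [hε]; field_simp
        simp only [hγ', hB0]
        nlinarith
  · intro x
    simp only [hγ']
    rw [Finset.sum_add_distrib, ← Finset.mul_sum, Finset.sum_sub_distrib, hBrow, hArow,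
      sub_self, mul_zero, add_zero]
    exact hγ.2.1 x
  · intro y
    simp only [hγ']
    rw [Finset.sum_add_distrib, ← Finset.mul_sum, Finset.sum_sub_distrib, hBcol, hAcol,
      sub_self, mul_zero, add_zero]
    exact hγ.2.2 y
  · have hBc : ∑ x, ∑ y, c x y * B x y = ∑ i, c (w i) (w i) := key w w c
    have hAc : ∑ x, ∑ y, c x y * A x y = ∑ i, c (w i) (w (i+1)) := key w (fun i => w (i+1)) c
    have expand : transportCost c γ'
        = transportCost c γ + ε * ((∑ x, ∑ y, c x y * B x y) - ∑ x, ∑ y, c x y * A x y) := by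
      unfold transportCost
      rw [show (∑ x, ∑ y, c x y * γ' x y)
          = ∑ x, ((∑ y, c x y * γ x y) + ε * ((∑ y, c x y * B x y) - ∑ y, c x y * A x y)) from
        Finset.sum_congr rfl fun x _ => by
          rw [show (∑ y, c x y * γ' x y)
              = ∑ y, (c x y * γ x y + ε * (c x y * B x y - c x y * A x y)) from
            Finset.sum_congr rfl fun y _ => by simp only [hγ']; ring]
          rw [Finset.sum_add_distrib, ← Finset.mul_sum, Finset.sum_sub_distrib]]
      rw [Finset.sum_add_distrib, ← Finset.mul_sum, Finset.sum_sub_distrib]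
    rw [expand, hBc, hAc]
    have hmono := hdiag J w w (fun j => rfl)
    nlinarith
  · have hBd : ∑ x, B x x = (J:ℝ) + 2 := by
      have h1 : ∀ x, B x x = ∑ i, ee x (w i) := hBdiag
      simp only [h1]
      rw [Finset.sum_comm]
      simp [sum_ee]
    have hAd : ∑ x, A x x = 0 := by simp [hAdiag]
    have : ∑ x, γ' x x = (∑ x, γ x x) + ε * ((J:ℝ) + 2) := by
      simp only [hγ']
      rw [Finset.sum_add_distrib, ← Finset.mul_sum, Finset.sum_sub_distrib, hBd, hAd, sub_zero]
    rw [this]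
    nlinarith

end AUX

lemma transGen_walk {Z : Type*} {r : Z → Z → Prop} {a b : Z} (h : Relation.TransGen r a b) :
    ∃ (J : ℕ) (z : ℕ → Z), z 0 = a ∧ z (J+1) = b ∧ ∀ j ≤ J, r (z j) (z (j+1)) := by
  induction h with
  | @single b hab =>
    refine ⟨0, fun n => if n = 0 then a else b, by simp, by simp, ?_⟩
    intro j hj
    interval_cases j
    simpa using hab
  | @tail b d hab hbc ih =>
    obtain ⟨J, z, h0, h1, he⟩ := ih
    refine ⟨J+1, fun n => if n ≤ J+1 then z n else d, by simp [h0], by simp, ?_⟩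
    intro j hj
    rcases Nat.lt_or_ge j (J+1) with hlt | hge
    · have hj1 : j ≤ J := by omega
      simp only [if_pos (by omega : j ≤ J+1), if_pos (by omega : j+1 ≤ J+1)]
      exact he j hj1
    · have hjeq : j = J+1 := by omega
      subst hjeq
      simp only [if_pos (le_refl (J+1)), if_neg (by omega : ¬ J+1+1 ≤ J+1), h1]
      exact hbc

lemma exists_fin_cycle {Z : Type*} {r : Z → Z → Prop} (hirr : ∀ x, ¬ r x x) {a : Z}
    (h : Relation.TransGen r a a) :
    ∃ (J : ℕ) (w : Fin (J+2) → Z), ∀ i, r (w i) (w (i+1)) := by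
  obtain ⟨J, z, h0, h1, he⟩ := transGen_walk h
  cases J with
  | zero =>
    have := he 0 le_rfl
    rw [h0, h1] at this
    exact absurd this (hirr a)
  | succ J' =>
    refine ⟨J', fun i => z i.val, fun i => ?_⟩
    have hval : ((i + 1 : Fin (J'+2))).val = (i.val + 1) % (J'+2) := by
      rw [Fin.val_add]
      norm_num
    by_cases hi : i.val = J' + 1
    · have h2 : ((i + 1 : Fin (J'+2))).val = 0 := by rw [hval, hi]; simp
      have h3 : z 0 = z (J' + 2) := by rw [h0, ← h1]
      show r (z i.val) (z ((i + 1 : Fin (J'+2))).val)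
      rw [h2, hi, h3]
      exact he (J'+1) le_rfl
    · have hlt : i.val + 1 < J' + 2 := by omega
      have h2 : ((i + 1 : Fin (J'+2))).val = i.val + 1 := by rw [hval, Nat.mod_eq_of_lt hlt]
      show r (z i.val) (z ((i + 1 : Fin (J'+2))).val)
      rw [h2]
      exact he i.val (by omega)

lemma exists_max_diag_optimal {Z : Type*} [Fintype Z] [Nonempty Z]
    (c : Z → Z → ℝ) (p q : Z → ℝ) (hp : IsProbVec p) (hq : IsProbVec q) :
    ∃ γ : Z → Z → ℝ, IsOptimalCoupling c γ p q ∧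
      ∀ γ'' : Z → Z → ℝ, IsOptimalCoupling c γ'' p q → ∑ z, γ'' z z ≤ ∑ z, γ z z := by
  classical
  set C : Set (Z → Z → ℝ) := {γ | IsCoupling γ p q} with hC
  have heval : ∀ (x y : Z), Continuous (fun γ : Z → Z → ℝ => γ x y) :=
    fun x y => (continuous_apply y).comp (continuous_apply x)
  have hCclosed : IsClosed C := by
    have : C = (⋂ x, ⋂ y, {γ : Z → Z → ℝ | 0 ≤ γ x y}) ∩
        ((⋂ x, {γ : Z → Z → ℝ | ∑ y, γ x y = p x}) ∩
         (⋂ y, {γ : Z → Z → ℝ | ∑ x, γ x y = q y})) := by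
      ext γ
      simp only [hC, Set.mem_setOf_eq, Set.mem_inter_iff, Set.mem_iInter, IsCoupling]
    rw [this]
    refine IsClosed.inter (isClosed_iInter fun x => isClosed_iInter fun y =>
        isClosed_le continuous_const (heval x y)) (IsClosed.inter ?_ ?_)
    · exact isClosed_iInter fun x => isClosed_eq
        (continuous_finset_sum _ fun y _ => heval x y) continuous_const
    · exact isClosed_iInter fun y => isClosed_eq
        (continuous_finset_sum _ fun x _ => heval x y) continuous_const
  have hCsub : C ⊆ Set.Icc 0 1 := by
    intro γ hγ
    constructor
    · intro x; intro y; exact hγ.1 x y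
    · intro x; intro y
      show γ x y ≤ (1:ℝ)
      have h1 : γ x y ≤ ∑ y', γ x y' :=
        Finset.single_le_sum (fun y' _ => hγ.1 x y') (mem_univ y)
      have h2 : p x ≤ ∑ x', p x' :=
        Finset.single_le_sum (fun x' _ => hp.1 x') (mem_univ x)
      rw [hγ.2.1 x] at h1
      rw [hp.2] at h2
      linarith
  have hCcomp : IsCompact C := isCompact_Icc.of_isClosed_subset hCclosed hCsub
  have hCne : C.Nonempty := by
    refine ⟨fun x y => p x * q y,
      ⟨fun x y => mul_nonneg (hp.1 x) (hq.1 y), fun x => ?_, fun y => ?_⟩⟩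
    · rw [← Finset.mul_sum, hq.2, mul_one]
    · rw [← Finset.sum_mul, hp.2, one_mul]
  have hcost : Continuous (transportCost c) := by
    unfold transportCost
    exact continuous_finset_sum _ fun x _ => continuous_finset_sum _ fun y _ =>
      continuous_const.mul (heval x y)
  obtain ⟨γ₁, hγ₁C, hγ₁min⟩ := hCcomp.exists_isMinOn hCne hcost.continuousOn
  set O : Set (Z → Z → ℝ) := {γ | γ ∈ C ∧ transportCost c γ ≤ transportCost c γ₁} with hO
  have hOclosed : IsClosed O := hCclosed.inter (isClosed_le hcost continuous_const)
  have hOcomp : IsCompact O := hCcomp.of_isClosed_subset hOclosed (fun γ h => h.1)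
  have hOne : O.Nonempty := ⟨γ₁, hγ₁C, le_refl _⟩
  have hdiagc : Continuous (fun γ : Z → Z → ℝ => ∑ z, γ z z) :=
    continuous_finset_sum _ fun z _ => heval z z
  obtain ⟨γ, hγO, hγmax⟩ := hOcomp.exists_isMaxOn hOne hdiagc.continuousOn
  have hopt : IsOptimalCoupling c γ p q :=
    ⟨hγO.1, fun γ' hγ' => le_trans hγO.2 (hγ₁min hγ')⟩
  exact ⟨γ, hopt, fun γ'' hγ'' => hγmax ⟨hγ''.1, hγ''.2 γ₁ hγ₁C⟩⟩

/-- Bound on mass moved. If the diagonal is `c`-cyclically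
monotone, then some `c`-optimal coupling of `p` and `q` keeps all but at most
`(|Z| − 1)·‖q − p‖` of the mass fixed. -/
theorem mass_moved_bound {Z : Type*} [Fintype Z] [Nonempty Z]
    (c : Z → Z → ℝ) (p q : Z → ℝ) (hp : IsProbVec p) (hq : IsProbVec q)
    (hdiag : CyclMono c {zz : Z × Z | zz.1 = zz.2}) :
    ∃ γ : Z → Z → ℝ, IsOptimalCoupling c γ p q ∧
      1 - ∑ z, γ z z ≤ ((Fintype.card Z : ℝ) - 1) * tv q p := by
  classical
  obtain ⟨γ, hopt, hmax⟩ := exists_max_diag_optimal c p q hp hq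
  refine ⟨γ, hopt, ?_⟩
  have hγ := hopt.1
  have hγnn := hγ.1
  set r : Z → Z → Prop := fun x y => x ≠ y ∧ 0 < γ x y with hr
  have hirr : ∀ x, ¬ r x x := fun x h => h.1 rfl
  have hacyc : ∀ x, ¬ Relation.TransGen r x x := by
    intro a ha
    obtain ⟨J, w, hw⟩ := exists_fin_cycle hirr ha
    obtain ⟨γ', hγ'c, hγ'cost, hγ'diag⟩ :=
      cycle_improve c p q γ hγ J w (fun i => (hw i).2) (fun i => (hw i).1) hdiag
    have hγ'opt : IsOptimalCoupling c γ' p q :=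
      ⟨hγ'c, fun γ'' h'' => le_trans hγ'cost (hopt.2 γ'' h'')⟩
    exact absurd (hmax γ' hγ'opt) (not_le.mpr hγ'diag)
  set n := Fintype.card Z with hn
  have hn1 : 1 ≤ n := Fintype.card_pos
  set f : Z → ℕ := fun x => (univ.filter fun z => Relation.TransGen r z x).card with hf
  have hflt : ∀ x y, r x y → f x < f y := by
    intro x y hxy
    apply Finset.card_lt_card
    rw [Finset.ssubset_iff_of_subset]
    · exact ⟨x, Finset.mem_filter.mpr ⟨mem_univ x, Relation.TransGen.single hxy⟩,
        fun hx => hacyc x ((Finset.mem_filter.mp hx).2)⟩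
    · intro z hz
      rw [Finset.mem_filter] at hz ⊢
      exact ⟨hz.1, hz.2.tail hxy⟩
  have hfle : ∀ x, f x ≤ n - 1 := by
    intro x
    have hsub : (univ.filter fun z => Relation.TransGen r z x) ⊆ univ.erase x := by
      intro z hz
      rw [Finset.mem_erase]
      exact ⟨fun h => hacyc x (h ▸ (Finset.mem_filter.mp hz).2), mem_univ z⟩
    calc f x ≤ (univ.erase x).card := Finset.card_le_card hsub
      _ = n - 1 := by rw [Finset.card_erase_of_mem (mem_univ x), Finset.card_univ]
  have hzero : ∀ x y, ¬ f x < f y → x ≠ y → γ x y = 0 := by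
    intro x y h hxy
    by_contra hne
    exact h (hflt x y ⟨hxy, lt_of_le_of_ne (hγnn x y) (Ne.symm hne)⟩)
  -- mass moved
  have hM : 1 - ∑ z, γ z z = ∑ x, ∑ y, (if x = y then 0 else γ x y) := by
    have hrow : ∀ x, ∑ y, (if x = y then 0 else γ x y) = p x - γ x x := by
      intro x
      have h1 : ∑ y, (if x = y then 0 else γ x y)
          = (∑ y, γ x y) - ∑ y, (if x = y then γ x y else 0) := by
        rw [← Finset.sum_sub_distrib]
        refine Finset.sum_congr rfl fun y _ => by split <;> simp
      rw [h1, hγ.2.1 x, Finset.sum_ite_eq univ x (fun y => γ x y)]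
      simp
    rw [Finset.sum_congr rfl fun x _ => hrow x, Finset.sum_sub_distrib, hp.2]
  -- tv facts
  set tvv := ∑ x, max (p x - q x) 0 with htvv
  have hsum0 : ∑ x, (p x - q x) = 0 := by rw [Finset.sum_sub_distrib, hp.2, hq.2]; ring
  have htveq : tvv = tv q p := by
    unfold tv
    have habs : ∀ x : Z, max (p x - q x) 0 = ((p x - q x) + |q x - p x|)/2 := by
      intro x
      rw [abs_sub_comm]
      rcases le_total (p x - q x) 0 with h | h
      · rw [max_eq_right h, abs_of_nonpos h]; ring
      · rw [max_eq_left h, abs_of_nonneg h]; ring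
    rw [htvv, Finset.sum_congr rfl fun x _ => habs x, ← Finset.sum_div,
      Finset.sum_add_distrib, hsum0, zero_add]
  have htvnn : 0 ≤ tvv := Finset.sum_nonneg fun x _ => le_max_right _ _
  -- the cut flows
  set F : ℕ → ℝ := fun k => ∑ x, ∑ y, (if f x ≤ k ∧ ¬ f y ≤ k then γ x y else 0) with hF
  have hFle : ∀ k, F k ≤ tvv := by
    intro k
    have e1 : ∀ x y : Z, (if f x ≤ k ∧ ¬ f y ≤ k then γ x y else 0)
        = (if f x ≤ k then γ x y else 0) - (if f x ≤ k ∧ f y ≤ k then γ x y else 0) := by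
      intro x y
      by_cases hx : f x ≤ k <;> by_cases hy : f y ≤ k <;> simp [hx, hy]
    have e2 : ∀ x y : Z, (if f x ≤ k ∧ f y ≤ k then γ x y else 0)
        = (if f y ≤ k then γ x y else 0) := by
      intro x y
      by_cases hx : f x ≤ k <;> by_cases hy : f y ≤ k <;> simp [hx, hy]
      have hne : x ≠ y := fun h => hx (h ▸ hy)
      exact (hzero x y (by omega) hne).symm
    have e3 : F k = (∑ x, (if f x ≤ k then p x else 0)) - ∑ y, (if f y ≤ k then q y else 0) := by
      show (∑ x, ∑ y, (if f x ≤ k ∧ ¬ f y ≤ k then γ x y else 0)) = _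
      rw [show (∑ x, ∑ y, (if f x ≤ k ∧ ¬ f y ≤ k then γ x y else 0))
          = (∑ x, ∑ y, (if f x ≤ k then γ x y else 0))
            - ∑ x, ∑ y, (if f y ≤ k then γ x y else 0) from by
        rw [← Finset.sum_sub_distrib]
        refine Finset.sum_congr rfl fun x _ => ?_
        rw [← Finset.sum_sub_distrib]
        exact Finset.sum_congr rfl fun y _ => by rw [e1, e2]]
      congr 1
      · refine Finset.sum_congr rfl fun x _ => ?_
        by_cases hx : f x ≤ k <;> simp [hx, hγ.2.1 x]
      · rw [Finset.sum_comm]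
        refine Finset.sum_congr rfl fun y _ => ?_
        by_cases hy : f y ≤ k <;> simp [hy, hγ.2.2 y]
    rw [e3, ← Finset.sum_sub_distrib]
    refine Finset.sum_le_sum fun x _ => ?_
    by_cases hx : f x ≤ k
    · simp only [if_pos hx]
      exact le_max_left _ _
    · simp only [if_neg hx, sub_zero]
      exact le_max_right _ _
  have hite : ∀ (P : Prop) [Decidable P] (a : ℝ), 0 ≤ a → 0 ≤ (if P then a else 0) := by
    intro P _ a ha
    split
    · exact ha
    · exact le_refl 0
  -- mass moved at most sum of cuts
  have hMle : (∑ x, ∑ y, (if x = y then 0 else γ x y)) ≤ ∑ k ∈ Finset.range (n-1), F k := by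
    have hterm : ∀ x y, (if x = y then 0 else γ x y)
        ≤ ∑ k ∈ Finset.range (n-1), (if f x ≤ k ∧ ¬ f y ≤ k then γ x y else 0) := by
      intro x y
      by_cases hxy : x = y
      · simp only [if_pos hxy]
        exact Finset.sum_nonneg fun k _ => hite _ _ (hγnn x y)
      · simp only [if_neg hxy]
        by_cases hg : 0 < γ x y
        · have hlt : f x < f y := hflt x y ⟨hxy, hg⟩
          have hyle : f y ≤ n - 1 := hfle y
          have hmem : f x ∈ Finset.range (n-1) := Finset.mem_range.mpr (by omega)
          have hcond : f x ≤ f x ∧ ¬ f y ≤ f x := ⟨le_rfl, by omega⟩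
          calc γ x y = (if f x ≤ f x ∧ ¬ f y ≤ f x then γ x y else 0) := by rw [if_pos hcond]
            _ ≤ ∑ k ∈ Finset.range (n-1), (if f x ≤ k ∧ ¬ f y ≤ k then γ x y else 0) :=
              Finset.single_le_sum (f := fun k => if f x ≤ k ∧ ¬ f y ≤ k then γ x y else 0)
                (fun k _ => hite _ _ (hγnn x y)) hmem
        · have h0 : γ x y = 0 := le_antisymm (not_lt.mp hg) (hγnn x y)
          rw [h0]
          exact Finset.sum_nonneg fun k _ => hite _ _ (le_refl 0)
    calc (∑ x, ∑ y, (if x = y then 0 else γ x y))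
        ≤ ∑ x, ∑ y, ∑ k ∈ Finset.range (n-1), (if f x ≤ k ∧ ¬ f y ≤ k then γ x y else 0) :=
          Finset.sum_le_sum fun x _ => Finset.sum_le_sum fun y _ => hterm x y
      _ = ∑ k ∈ Finset.range (n-1), F k := by
          rw [show (∑ x, ∑ y, ∑ k ∈ Finset.range (n-1),
              (if f x ≤ k ∧ ¬ f y ≤ k then γ x y else 0))
            = ∑ x, ∑ k ∈ Finset.range (n-1), ∑ y,
              (if f x ≤ k ∧ ¬ f y ≤ k then γ x y else 0) from
            Finset.sum_congr rfl fun x _ => Finset.sum_comm]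
          rw [Finset.sum_comm]
  have hsumF : ∑ k ∈ Finset.range (n-1), F k ≤ ((n:ℝ) - 1) * tvv := by
    calc ∑ k ∈ Finset.range (n-1), F k ≤ (Finset.range (n-1)).card • tvv :=
          Finset.sum_le_card_nsmul _ _ _ (fun k _ => hFle k)
      _ = ((n-1 : ℕ) : ℝ) * tvv := by rw [Finset.card_range, nsmul_eq_mul]
      _ = ((n:ℝ) - 1) * tvv := by
          rw [Nat.cast_sub hn1, Nat.cast_one]
  rw [hM, ← htveq]
  calc (∑ x, ∑ y, (if x = y then 0 else γ x y)) ≤ ∑ k ∈ Finset.range (n-1), F k := hMle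
    _ ≤ ((n:ℝ) - 1) * tvv := hsumF
end

section
/- Let X and Y be finite nonempty sets and c : X × Y → ℝ a cost function. Let p, p' ∈ Δ(X) and q, q' ∈ Δ(Y). For any c-optimal coupling γ of p and q, there exists a c-optimal coupling γ' of p' and q' such that ‖γ' − γ‖ ≤ min{min(|X|,|Y|), max(|X|,|Y|) − 1}·(‖p' − p‖ + ‖q' − q‖), where ‖γ' − γ‖ = (1/2)·Σ_{x,y} |γ'(x,y) − γ(x,y)|. -/
open Finset

/-- Total variation distance between two functions on a product:
`(1/2)·Σ_{x,y} |γ x y − γ' x y|`. -/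
noncomputable def tv2 {X Y : Type*} [Fintype X] [Fintype Y]
    (γ γ' : X → Y → ℝ) : ℝ :=
  (∑ x, ∑ y, |γ x y - γ' x y|) / 2

open scoped Classical

namespace OTStab

variable {X Y : Type*} [Fintype X] [Fintype Y]

/-- Step relation on `X ⊕ Y` induced by the signed matrix `δ`. -/
def dstep (δ : X → Y → ℝ) : (X ⊕ Y) → (X ⊕ Y) → Prop
  | .inl x, .inr y => 0 < δ x y
  | .inr y, .inl x => δ x y < 0
  | _, _ => False

noncomputable def emat (x : X) (y : Y) : X → Y → ℝ :=
  fun x' y' => if x' = x ∧ y' = y then 1 else 0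

noncomputable def dmat : (X ⊕ Y) → (X ⊕ Y) → X → Y → ℝ
  | .inl x, .inr y => emat x y
  | .inr y, .inl x => fun x' y' => -(emat x y x' y')
  | _, _ => 0

noncomputable def vmat : List (X ⊕ Y) → X → Y → ℝ
  | a :: b :: l => fun x y => dmat a b x y + vmat (b :: l) x y
  | _ => 0

omit [Fintype X] [Fintype Y] in
lemma vmat_nil : (vmat ([] : List (X ⊕ Y))) = 0 := rfl
omit [Fintype X] [Fintype Y] in
lemma vmat_single (a : X ⊕ Y) : vmat [a] = 0 := rfl
omit [Fintype X] [Fintype Y] in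
lemma vmat_cons (a b : X ⊕ Y) (l : List (X ⊕ Y)) (x : X) (y : Y) :
    vmat (a :: b :: l) x y = dmat a b x y + vmat (b :: l) x y := rfl

lemma sum_emat_row (x0 : X) (y0 : Y) (x : X) :
    ∑ y, emat x0 y0 x y = if x = x0 then 1 else 0 := by
  rcases eq_or_ne x x0 with h | h <;> simp [emat, h]

lemma sum_emat_col (x0 : X) (y0 : Y) (y : Y) :
    ∑ x, emat x0 y0 x y = if y = y0 then 1 else 0 := by
  rcases eq_or_ne y y0 with h | h <;> simp [emat, h, and_comm]

lemma dmat_row {δ : X → Y → ℝ} {a b : X ⊕ Y} (h : dstep δ a b) (x : X) :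
    ∑ y, dmat a b x y = (if a = Sum.inl x then 1 else 0) - (if b = Sum.inl x then 1 else 0) := by
  match a, b with
  | .inl x', .inr y' =>
    simp only [dmat, sum_emat_row]
    rcases eq_or_ne x x' with h' | h' <;> simp [h', eq_comm]
  | .inr y', .inl x' =>
    simp only [dmat, Finset.sum_neg_distrib, sum_emat_row]
    rcases eq_or_ne x x' with h' | h' <;> simp [h', eq_comm]
  | .inl _, .inl _ => exact absurd h (by simp [dstep])
  | .inr _, .inr _ => exact absurd h (by simp [dstep])

lemma dmat_col {δ : X → Y → ℝ} {a b : X ⊕ Y} (h : dstep δ a b) (y : Y) :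
    ∑ x, dmat a b x y = (if b = Sum.inr y then 1 else 0) - (if a = Sum.inr y then 1 else 0) := by
  match a, b with
  | .inl x', .inr y' =>
    simp only [dmat, sum_emat_col]
    rcases eq_or_ne y y' with h' | h' <;> simp [h', eq_comm]
  | .inr y', .inl x' =>
    simp only [dmat, Finset.sum_neg_distrib, sum_emat_col]
    rcases eq_or_ne y y' with h' | h' <;> simp [h', eq_comm]
  | .inl _, .inl _ => exact absurd h (by simp [dstep])
  | .inr _, .inr _ => exact absurd h (by simp [dstep])

lemma vmat_rowsum {δ : X → Y → ℝ} :
    ∀ (w : List (X ⊕ Y)), w.Chain' (dstep δ) → ∀ x : X,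
      ∑ y, vmat w x y =
        (if w.head? = some (Sum.inl x) then 1 else 0) -
          (if w.getLast? = some (Sum.inl x) then 1 else 0)
  | [] => by intro _ x; simp [vmat_nil]
  | [a] => by intro _ x; simp [vmat_single]
  | a :: b :: l => by
    intro hc x
    have hab : dstep δ a b := (List.isChain_cons_cons.mp hc).1
    have htl : (b :: l).Chain' (dstep δ) := (List.isChain_cons_cons.mp hc).2
    have IH := vmat_rowsum (b :: l) htl x
    simp only [vmat_cons, Finset.sum_add_distrib]
    rw [IH, dmat_row hab]
    have hlast : (a :: b :: l).getLast? = (b :: l).getLast? := by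
      rw [List.getLast?_cons_cons]
    rw [hlast]
    have hh1 : (a :: b :: l).head? = some a := rfl
    have hh2 : (b :: l).head? = some b := rfl
    rw [hh1, hh2]
    rcases eq_or_ne a (Sum.inl x) with h | h <;> rcases eq_or_ne b (Sum.inl x) with h2 | h2 <;>
      simp [h, h2] <;> ring

lemma vmat_colsum {δ : X → Y → ℝ} :
    ∀ (w : List (X ⊕ Y)), w.Chain' (dstep δ) → ∀ y : Y,
      ∑ x, vmat w x y =
        (if w.getLast? = some (Sum.inr y) then 1 else 0) -
          (if w.head? = some (Sum.inr y) then 1 else 0)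
  | [] => by intro _ y; simp [vmat_nil]
  | [a] => by intro _ y; simp [vmat_single]
  | a :: b :: l => by
    intro hc y
    have hab : dstep δ a b := (List.isChain_cons_cons.mp hc).1
    have htl : (b :: l).Chain' (dstep δ) := (List.isChain_cons_cons.mp hc).2
    have IH := vmat_colsum (b :: l) htl y
    simp only [vmat_cons, Finset.sum_add_distrib]
    rw [IH, dmat_col hab]
    have hlast : (a :: b :: l).getLast? = (b :: l).getLast? := by
      rw [List.getLast?_cons_cons]
    rw [hlast]
    have hh1 : (a :: b :: l).head? = some a := rfl
    have hh2 : (b :: l).head? = some b := rfl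
    rw [hh1, hh2]
    rcases eq_or_ne a (Sum.inr y) with h | h <;> rcases eq_or_ne b (Sum.inr y) with h2 | h2 <;>
      simp [h, h2] <;> ring

omit [Fintype X] [Fintype Y] in
lemma dmat_sign {δ : X → Y → ℝ} {a b : X ⊕ Y} (h : dstep δ a b) (x : X) (y : Y) :
    (0 ≤ δ x y → 0 ≤ dmat a b x y) ∧ (δ x y ≤ 0 → dmat a b x y ≤ 0) := by
  match a, b with
  | .inl x1, .inr y1 =>
    have hd : dmat (Sum.inl x1 : X ⊕ Y) (Sum.inr y1) x y = if x = x1 ∧ y = y1 then 1 else 0 := rfl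
    have hδ : 0 < δ x1 y1 := h
    by_cases hxy : x = x1 ∧ y = y1
    · rw [hd, if_pos hxy]
      refine ⟨fun _ => one_pos.le, fun hle => absurd hδ ?_⟩
      rw [hxy.1, hxy.2] at hle
      exact not_lt.mpr hle
    · rw [hd, if_neg hxy]; exact ⟨fun _ => le_rfl, fun _ => le_rfl⟩
  | .inr y1, .inl x1 =>
    have hd : dmat (Sum.inr y1 : X ⊕ Y) (Sum.inl x1) x y
        = -(if x = x1 ∧ y = y1 then 1 else 0) := rfl
    have hδ : δ x1 y1 < 0 := h
    by_cases hxy : x = x1 ∧ y = y1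
    · rw [hd, if_pos hxy]
      refine ⟨fun hle => absurd hδ ?_, fun _ => by norm_num⟩
      rw [hxy.1, hxy.2] at hle
      exact not_lt.mpr hle
    · rw [hd, if_neg hxy]; exact ⟨fun _ => by norm_num, fun _ => by norm_num⟩
  | .inl _, .inl _ => exact absurd h (by simp [dstep])
  | .inr _, .inr _ => exact absurd h (by simp [dstep])

omit [Fintype X] [Fintype Y] in
/-- Sign alignment of the walk matrix with `δ`. -/
lemma vmat_sign {δ : X → Y → ℝ} :
    ∀ (w : List (X ⊕ Y)), w.Chain' (dstep δ) → ∀ x y,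
      (0 ≤ δ x y → 0 ≤ vmat w x y) ∧ (δ x y ≤ 0 → vmat w x y ≤ 0)
  | [] => by intro _ x y; simp [vmat_nil]
  | [a] => by intro _ x y; simp [vmat_single]
  | a :: b :: l => by
    intro hc x y
    have hab : dstep δ a b := (List.isChain_cons_cons.mp hc).1
    have htl : (b :: l).Chain' (dstep δ) := (List.isChain_cons_cons.mp hc).2
    have IH := vmat_sign (b :: l) htl x y
    have hd := dmat_sign hab x y
    rw [vmat_cons]
    exact ⟨fun h => add_nonneg (hd.1 h) (IH.1 h), fun h => add_nonpos (hd.2 h) (IH.2 h)⟩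

omit [Fintype X] [Fintype Y] in
/-- The walk matrix is bounded by the length of the walk. -/
lemma vmat_abs_le :
    ∀ (w : List (X ⊕ Y)), ∀ x y, |vmat w x y| ≤ w.length
  | [] => by intro x y; simp [vmat_nil]
  | [a] => by intro x y; simp [vmat_single]
  | a :: b :: l => by
    intro x y
    have IH := vmat_abs_le (b :: l) x y
    have hd : |dmat a b x y| ≤ 1 := by
      match a, b with
      | .inl x1, .inr y1 =>
        have hd : dmat (Sum.inl x1 : X ⊕ Y) (Sum.inr y1) x y
            = if x = x1 ∧ y = y1 then 1 else 0 := rfl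
        rw [hd]; split <;> norm_num
      | .inr y1, .inl x1 =>
        have hd : dmat (Sum.inr y1 : X ⊕ Y) (Sum.inl x1) x y
            = -(if x = x1 ∧ y = y1 then 1 else 0) := rfl
        rw [hd]; split <;> norm_num
      | .inl x1, .inl x2 =>
        have hd : dmat (Sum.inl x1 : X ⊕ Y) (Sum.inl x2) x y = 0 := rfl
        rw [hd]; norm_num
      | .inr y1, .inr y2 =>
        have hd : dmat (Sum.inr y1 : X ⊕ Y) (Sum.inr y2) x y = 0 := rfl
        rw [hd]; norm_num
    rw [vmat_cons]
    calc |dmat a b x y + vmat (b :: l) x y| ≤ |dmat a b x y| + |vmat (b :: l) x y| := abs_add_le _ _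
    _ ≤ 1 + (b :: l).length := by gcongr
    _ = (a :: b :: l).length := by simp [add_comm]

omit [Fintype X] [Fintype Y] in
/-- The first step of a chain gives an entry of magnitude at least 1. -/
lemma vmat_exists_big {δ : X → Y → ℝ} (w : List (X ⊕ Y)) (hc : w.Chain' (dstep δ))
    (hl : 2 ≤ w.length) : ∃ x y, 1 ≤ |vmat w x y| := by
  match w, hl with
  | a :: b :: l, _ =>
    have hab : dstep δ a b := (List.isChain_cons_cons.mp hc).1
    have htl : (b :: l).Chain' (dstep δ) := (List.isChain_cons_cons.mp hc).2
    match a, b, hab with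
    | .inl x1, .inr y1, hab =>
      refine ⟨x1, y1, ?_⟩
      have hδ : 0 < δ x1 y1 := hab
      have hd : dmat (Sum.inl x1 : X ⊕ Y) (Sum.inr y1) x1 y1 = 1 := by
        show (if x1 = x1 ∧ y1 = y1 then (1:ℝ) else 0) = 1
        simp
      have hs : 0 ≤ vmat (Sum.inr y1 :: l) x1 y1 :=
        (vmat_sign (Sum.inr y1 :: l) htl x1 y1).1 hδ.le
      rw [vmat_cons, hd]
      rw [abs_of_nonneg (by linarith)]
      linarith
    | .inr y1, .inl x1, hab =>
      refine ⟨x1, y1, ?_⟩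
      have hδ : δ x1 y1 < 0 := hab
      have hd : dmat (Sum.inr y1 : X ⊕ Y) (Sum.inl x1) x1 y1 = -1 := by
        show -(if x1 = x1 ∧ y1 = y1 then (1:ℝ) else 0) = -1
        simp
      have hs : vmat (Sum.inl x1 :: l) x1 y1 ≤ 0 :=
        (vmat_sign (Sum.inl x1 :: l) htl x1 y1).2 hδ.le
      rw [vmat_cons, hd]
      rw [abs_of_nonpos (by linarith)]
      linarith

omit [Fintype X] [Fintype Y] in
/-- The support of the walk matrix is contained in the support of `δ`. -/
lemma vmat_support {δ : X → Y → ℝ} (w : List (X ⊕ Y)) (hc : w.Chain' (dstep δ))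
    (x : X) (y : Y) (h : δ x y = 0) : vmat w x y = 0 := by
  have h1 := (vmat_sign w hc x y).1 (le_of_eq h.symm)
  have h2 := (vmat_sign w hc x y).2 (le_of_eq h)
  linarith

omit [Fintype X] [Fintype Y] in
lemma abs_sub_aligned {a b t : ℝ} (h1 : 0 ≤ a → 0 ≤ b) (h2 : a ≤ 0 → b ≤ 0)
    (ht : 0 ≤ t) (hb : t * |b| ≤ |a|) : |a - t * b| = |a| - t * |b| := by
  rcases lt_trichotomy b 0 with hb0 | hb0 | hb0
  · have ha : a < 0 := by
      by_contra h
      push_neg at h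
      exact absurd (h1 h) (not_le.mpr hb0)
    rw [abs_of_neg hb0, abs_of_neg ha] at *
    have : a - t * b ≤ 0 := by nlinarith
    rw [abs_of_nonpos this]
    ring
  · subst hb0; simp
  · have ha : 0 < a := by
      by_contra h
      push_neg at h
      exact absurd (h2 h) (not_le.mpr hb0)
    rw [abs_of_pos hb0, abs_of_pos ha] at *
    have : 0 ≤ a - t * b := by nlinarith
    rw [abs_of_nonneg this]

lemma cost_add (c γ v : X → Y → ℝ) (t : ℝ) :
    transportCost c (fun x y => γ x y + t * v x y)
      = transportCost c γ + t * ∑ x, ∑ y, c x y * v x y := by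
  unfold transportCost
  rw [Finset.mul_sum, ← Finset.sum_add_distrib]
  refine Finset.sum_congr rfl fun x _ => ?_
  rw [Finset.mul_sum, ← Finset.sum_add_distrib]
  refine Finset.sum_congr rfl fun y _ => ?_
  ring

/-- Key perturbation lemma: if `γ'` is an optimal coupling of `(p',q')` minimizing the
ℓ¹ distance to `γ` among optimal couplings, then the signed difference `γ' - γ` admits
no closed chain (conformal cycle). -/
lemma no_conformal_cycle {c γ γ' : X → Y → ℝ} {p p2 : X → ℝ} {q q' : Y → ℝ}
    (hγ : IsOptimalCoupling c γ p q) (hγ' : IsOptimalCoupling c γ' p2 q')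
    (hmin : ∀ η, IsOptimalCoupling c η p2 q' →
      ∑ x, ∑ y, |γ' x y - γ x y| ≤ ∑ x, ∑ y, |η x y - γ x y|)
    {w : List (X ⊕ Y)} (hw : w.Chain' (dstep (fun x y => γ' x y - γ x y)))
    (hl : 2 ≤ w.length) (hcl : w.head? = w.getLast?) : False := by
  set δ : X → Y → ℝ := fun x y => γ' x y - γ x y with hδdef
  set v : X → Y → ℝ := vmat w with hvdef
  have hrow : ∀ x, ∑ y, v x y = 0 := by
    intro x
    rw [hvdef, vmat_rowsum w hw x, hcl, sub_self]
  have hcol : ∀ y, ∑ x, v x y = 0 := by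
    intro y
    rw [hvdef, vmat_colsum w hw y, hcl, sub_self]
  have hsign := fun x y => vmat_sign w hw x y
  obtain ⟨x0, y0, hbig⟩ := vmat_exists_big w hw hl
  have hsupp : ∀ x y, v x y ≠ 0 → δ x y ≠ 0 := by
    intro x y hv hd
    exact hv (vmat_support w hw x y hd)
  have hlen0 : (0:ℝ) < w.length := by
    have : (2:ℝ) ≤ w.length := by exact_mod_cast hl
    linarith
  set s : Finset (X × Y) := Finset.univ.filter (fun e => v e.1 e.2 ≠ 0) with hsdef
  have hs0 : (x0, y0) ∈ s := by
    rw [hsdef, Finset.mem_filter]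
    refine ⟨Finset.mem_univ _, ?_⟩
    intro h0
    rw [hvdef] at h0
    rw [h0] at hbig
    norm_num at hbig
  have hne : s.Nonempty := ⟨_, hs0⟩
  set t0 : ℝ := s.inf' hne (fun e => |δ e.1 e.2|) with ht0def
  have ht0 : 0 < t0 := by
    rw [ht0def, Finset.lt_inf'_iff]
    intro e he
    rw [hsdef, Finset.mem_filter] at he
    exact abs_pos.mpr (hsupp _ _ he.2)
  set t : ℝ := t0 / w.length with htdef
  have ht : 0 < t := div_pos ht0 hlen0
  have hb : ∀ x y, t * |v x y| ≤ |δ x y| := by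
    intro x y
    by_cases hv : v x y = 0
    · rw [hv]; simp [abs_nonneg]
    · have he : (x, y) ∈ s := by
        rw [hsdef, Finset.mem_filter]; exact ⟨Finset.mem_univ _, hv⟩
      calc t * |v x y| ≤ t * w.length :=
            mul_le_mul_of_nonneg_left (vmat_abs_le w x y) ht.le
        _ = t0 := div_mul_cancel₀ t0 (ne_of_gt hlen0)
        _ ≤ |δ x y| := Finset.inf'_le _ he
  have habs : ∀ x y, |δ x y - t * v x y| = |δ x y| - t * |v x y| := fun x y =>
    abs_sub_aligned (hsign x y).1 (hsign x y).2 ht.le (hb x y)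
  -- the perturbed couplings
  have hηnonneg : ∀ x y, 0 ≤ γ' x y - t * v x y := by
    intro x y
    rcases le_or_gt (v x y) 0 with hv | hv
    · have h1 : t * v x y ≤ 0 := mul_nonpos_of_nonneg_of_nonpos ht.le hv
      have := hγ'.1.1 x y
      linarith
    · have hδpos : 0 < δ x y := by
        rcases lt_trichotomy (δ x y) 0 with h | h | h
        · exact absurd ((hsign x y).2 h.le) (not_le.mpr hv)
        · exact absurd ((hsign x y).2 h.le) (not_le.mpr hv)
        · exact h
      have h2 : t * v x y ≤ δ x y := by
        have := hb x y
        rw [abs_of_pos hv, abs_of_pos hδpos] at this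
        exact this
      have := hγ.1.1 x y
      rw [hδdef] at h2
      simp only at h2
      linarith
  have hγ2nonneg : ∀ x y, 0 ≤ γ x y + t * v x y := by
    intro x y
    rcases le_or_gt 0 (v x y) with hv | hv
    · have h1 : 0 ≤ t * v x y := mul_nonneg ht.le hv
      have := hγ.1.1 x y
      linarith
    · have hδneg : δ x y < 0 := by
        rcases lt_trichotomy (δ x y) 0 with h | h | h
        · exact h
        · exact absurd ((hsign x y).1 h.ge) (not_le.mpr hv)
        · exact absurd ((hsign x y).1 h.le) (not_le.mpr hv)
      have h2 : -δ x y ≤ t * v x y + (-δ x y) + (-δ x y) := by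
        have := hb x y
        rw [abs_of_neg hv, abs_of_neg hδneg] at this
        nlinarith
      have h2' : δ x y ≤ t * v x y := by
        have := hb x y
        rw [abs_of_neg hv, abs_of_neg hδneg] at this
        linarith
      have := hγ'.1.1 x y
      rw [hδdef] at h2'
      simp only at h2'
      linarith
  have hηcoupling : IsCoupling (fun x y => γ' x y + (-t) * v x y) p2 q' := by
    refine ⟨fun x y => by have := hηnonneg x y; simpa [neg_mul] using this, fun x => ?_, fun y => ?_⟩
    · rw [Finset.sum_add_distrib]
      have : ∑ y, (-t) * v x y = (-t) * ∑ y, v x y := by rw [Finset.mul_sum]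
      rw [this, hrow x, mul_zero, add_zero]
      exact hγ'.1.2.1 x
    · rw [Finset.sum_add_distrib]
      have : ∑ x, (-t) * v x y = (-t) * ∑ x, v x y := by rw [Finset.mul_sum]
      rw [this, hcol y, mul_zero, add_zero]
      exact hγ'.1.2.2 y
  have hγ2coupling : IsCoupling (fun x y => γ x y + t * v x y) p q := by
    refine ⟨hγ2nonneg, fun x => ?_, fun y => ?_⟩
    · rw [Finset.sum_add_distrib]
      have : ∑ y, t * v x y = t * ∑ y, v x y := by rw [Finset.mul_sum]
      rw [this, hrow x, mul_zero, add_zero]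
      exact hγ.1.2.1 x
    · rw [Finset.sum_add_distrib]
      have : ∑ x, t * v x y = t * ∑ x, v x y := by rw [Finset.mul_sum]
      rw [this, hcol y, mul_zero, add_zero]
      exact hγ.1.2.2 y
  set Kv : ℝ := ∑ x, ∑ y, c x y * v x y with hKvdef
  have hK1 : 0 ≤ Kv := by
    have h := hγ.2 _ hγ2coupling
    rw [cost_add] at h
    nlinarith
  have hK2 : Kv ≤ 0 := by
    have h := hγ'.2 _ hηcoupling
    rw [cost_add] at h
    nlinarith
  have hKv : Kv = 0 := le_antisymm hK2 hK1
  have hcostη : transportCost c (fun x y => γ' x y + (-t) * v x y) = transportCost c γ' := by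
    rw [cost_add, ← hKvdef, hKv, mul_zero, add_zero]
  have hηopt : IsOptimalCoupling c (fun x y => γ' x y + (-t) * v x y) p2 q' :=
    ⟨hηcoupling, fun η2 h2 => by rw [hcostη]; exact hγ'.2 η2 h2⟩
  have hm := hmin _ hηopt
  have heq : ∀ x y, (γ' x y + (-t) * v x y) - γ x y = δ x y - t * v x y := by
    intro x y; rw [hδdef]; ring
  have hm2 : ∑ x, ∑ y, |δ x y| ≤ (∑ x, ∑ y, |δ x y|) - t * ∑ x, ∑ y, |v x y| := by
    calc ∑ x, ∑ y, |δ x y| ≤ ∑ x, ∑ y, |(γ' x y + (-t) * v x y) - γ x y| := hm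
      _ = ∑ x, ∑ y, (|δ x y| - t * |v x y|) := by
          refine Finset.sum_congr rfl fun x _ => Finset.sum_congr rfl fun y _ => ?_
          rw [heq x y, habs x y]
      _ = (∑ x, ∑ y, |δ x y|) - t * ∑ x, ∑ y, |v x y| := by
          rw [Finset.mul_sum, ← Finset.sum_sub_distrib]
          refine Finset.sum_congr rfl fun x _ => ?_
          rw [Finset.mul_sum, ← Finset.sum_sub_distrib]
  have hlow : (1:ℝ) ≤ ∑ x, ∑ y, |v x y| := by
    calc (1:ℝ) ≤ |v x0 y0| := hbig
      _ ≤ ∑ y, |v x0 y| :=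
        Finset.single_le_sum (f := fun y => |v x0 y|) (fun y _ => abs_nonneg _)
          (Finset.mem_univ y0)
      _ ≤ ∑ x, ∑ y, |v x y| :=
        Finset.single_le_sum (f := fun x => ∑ y, |v x y|)
          (fun x _ => Finset.sum_nonneg fun y _ => abs_nonneg _) (Finset.mem_univ x0)
  nlinarith

omit [Fintype X] [Fintype Y] in
lemma dstep_ne {δ : X → Y → ℝ} {a b : X ⊕ Y} (h : dstep δ a b) : a ≠ b := by
  match a, b with
  | .inl _, .inr _ => simp
  | .inr _, .inl _ => simp
  | .inl _, .inl _ => exact absurd h (by simp [dstep])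
  | .inr _, .inr _ => exact absurd h (by simp [dstep])

omit [Fintype X] [Fintype Y] in
lemma dstep_flip {δ : X → Y → ℝ} {a b : X ⊕ Y} (h : dstep δ a b) :
    b.isLeft = !a.isLeft := by
  match a, b with
  | .inl _, .inr _ => simp
  | .inr _, .inl _ => simp
  | .inl _, .inl _ => exact absurd h (by simp [dstep])
  | .inr _, .inr _ => exact absurd h (by simp [dstep])

/-- From a chain with a duplicate vertex one can extract a closed chain. -/
lemma closed_of_dup {α : Type*} [DecidableEq α] {R : α → α → Prop} :
    ∀ (w : List α), w.Chain' R → ¬ w.Nodup →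
      ∃ w' : List α, w'.Chain' R ∧ 2 ≤ w'.length ∧ w'.head? = w'.getLast?
  | [] => fun _ hnd => absurd List.nodup_nil hnd
  | a :: l => fun hc hnd => by
    by_cases ha : a ∈ l
    · set j := l.idxOf a with hjdef
      have hjlt : j < l.length := List.idxOf_lt_length_iff.mpr ha
      refine ⟨a :: l.take (j + 1), ?_, by simp; omega, ?_⟩
      · have : a :: l.take (j + 1) = (a :: l).take (j + 2) := by simp
        rw [this]
        exact hc.take _
      · have hlen : (l.take (j + 1)).length = j + 1 := by
          rw [List.length_take]
          omega
        have hgl : (a :: l.take (j + 1)).getLast? = (l.take (j + 1)).getLast? := by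
          have hne : l.take (j + 1) ≠ [] := by
            intro h
            rw [h] at hlen
            simp at hlen
          match hh : l.take (j + 1) with
          | [] => exact absurd hh hne
          | b :: t => rw [List.getLast?_cons_cons]
        rw [hgl, List.getLast?_eq_getElem?, hlen]
        simp only [Nat.add_sub_cancel]
        rw [List.getElem?_take]
        rw [if_pos (by omega)]
        rw [List.getElem?_eq_getElem hjlt]
        simp [hjdef, List.getElem_idxOf]
    · have hnd' : ¬ l.Nodup := by
        intro h
        exact hnd (List.nodup_cons.mpr ⟨ha, h⟩)
      exact closed_of_dup l hc.tail hnd'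

/-- Counting lemma for alternating boolean lists. -/
lemma alt_count :
    ∀ (l : List Bool), l.Chain' (· ≠ ·) →
      l.countP (· = true) ≤ l.countP (· = false) + 1 ∧
        l.countP (· = false) ≤ l.countP (· = true) + 1
  | [] => by simp
  | [a] => by cases a <;> simp [List.countP_cons]
  | a :: b :: l => fun h => by
    have hab : a ≠ b := (List.isChain_cons_cons.mp h).1
    have ht : (b :: l).Chain' (· ≠ ·) := (List.isChain_cons_cons.mp h).2
    have IH := alt_count l ht.tail
    cases a <;> cases b <;> simp_all [List.countP_cons] <;> omega

omit [Fintype Y] in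
lemma nodup_countP_left (w : List (X ⊕ Y)) (hnd : w.Nodup) :
    w.countP (fun z => z.isLeft) ≤ Fintype.card X := by
  classical
  have h1 : (w.filterMap Sum.getLeft?).Nodup := by
    refine List.Nodup.filterMap ?_ hnd
    intro a a' b hb hb'
    match a, a' with
    | .inl u, .inl u' =>
      simp only [Sum.getLeft?] at hb hb'
      rw [Option.mem_def, Option.some_inj] at hb hb'
      rw [hb, hb']
    | .inl u, .inr v => simp [Sum.getLeft?] at hb'
    | .inr v, _ => simp [Sum.getLeft?] at hb
  have h2 : ∀ u : List (X ⊕ Y),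
      (u.filterMap Sum.getLeft?).length = u.countP (fun z => z.isLeft) := by
    intro u
    induction u with
    | nil => simp
    | cons a t ih =>
      match a with
      | .inl x => simp [List.filterMap_cons, List.countP_cons, Sum.getLeft?, ih]
      | .inr y => simp [List.filterMap_cons, List.countP_cons, Sum.getLeft?, ih]
  rw [← h2]
  exact h1.length_le_card

omit [Fintype X] in
lemma nodup_countP_right (w : List (X ⊕ Y)) (hnd : w.Nodup) :
    w.countP (fun z => z.isRight) ≤ Fintype.card Y := by
  classical
  have h1 : (w.filterMap Sum.getRight?).Nodup := by
    refine List.Nodup.filterMap ?_ hnd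
    intro a a' b hb hb'
    match a, a' with
    | .inr u, .inr u' =>
      simp only [Sum.getRight?] at hb hb'
      rw [Option.mem_def, Option.some_inj] at hb hb'
      rw [hb, hb']
    | .inr u, .inl v => simp [Sum.getRight?] at hb'
    | .inl v, _ => simp [Sum.getRight?] at hb
  have h2 : ∀ u : List (X ⊕ Y),
      (u.filterMap Sum.getRight?).length = u.countP (fun z => z.isRight) := by
    intro u
    induction u with
    | nil => simp
    | cons a t ih =>
      match a with
      | .inl x => simp [List.filterMap_cons, List.countP_cons, Sum.getRight?, ih]
      | .inr y => simp [List.filterMap_cons, List.countP_cons, Sum.getRight?, ih]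
  rw [← h2]
  exact h1.length_le_card

/-- A nodup alternating chain has length at most `2 * min m n + 1`. -/
lemma chain_length_le {δ : X → Y → ℝ} (w : List (X ⊕ Y)) (hc : w.Chain' (dstep δ))
    (hnd : w.Nodup) :
    w.length ≤ 2 * min (Fintype.card X) (Fintype.card Y) + 1 := by
  classical
  have halt : (w.map Sum.isLeft).Chain' (· ≠ ·) := by
    rw [List.Chain', List.isChain_map]
    refine hc.imp fun a b hab => ?_
    rw [dstep_flip hab]
    cases a.isLeft <;> simp
  have hcount := alt_count (w.map Sum.isLeft) halt
  rw [List.countP_map, List.countP_map] at hcount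
  have e1 : w.countP ((fun b => b = true) ∘ Sum.isLeft) = w.countP (fun z => z.isLeft) := by
    refine List.countP_congr fun z _ => ?_
    cases z <;> simp
  have e2 : w.countP ((fun b => b = false) ∘ Sum.isLeft) = w.countP (fun z => z.isRight) := by
    refine List.countP_congr fun z _ => ?_
    cases z <;> simp
  rw [e1, e2] at hcount
  have hlen : w.length = w.countP (fun z => z.isLeft) + w.countP (fun z => z.isRight) := by
    have := List.length_eq_countP_add_countP (fun z : X ⊕ Y => z.isLeft) (l := w)
    rw [this]
    congr 1
    refine List.countP_congr fun z _ => ?_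
    cases z <;> simp
  have b1 := nodup_countP_left w hnd
  have b2 := nodup_countP_right w hnd
  omega

omit [Fintype X] [Fintype Y] in
lemma nat_abs_cast2 (a lo d : ℕ) (h1 : lo ≤ a) (h2 : a ≤ lo + 2 * d) :
    |(a : ℝ) - ((lo : ℝ) + (d : ℝ))| ≤ (d : ℝ) := by
  have c1 : (lo : ℝ) ≤ a := by exact_mod_cast h1
  have c2 : (a : ℝ) ≤ (lo : ℝ) + 2 * d := by exact_mod_cast h2
  rw [abs_le]
  constructor <;> linarith

/-- Existence of a height function with small per-side oscillation, given acyclicity. -/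
lemma exists_heights [Nonempty X] [Nonempty Y] {δ : X → Y → ℝ}
    (hnc : ∀ w : List (X ⊕ Y), w.Chain' (dstep δ) → 2 ≤ w.length → w.head? ≠ w.getLast?) :
    ∃ (hX : X → ℝ) (hY : Y → ℝ) (cX cY : ℝ),
      (∀ x y, 0 < δ x y → hX x + 1 ≤ hY y) ∧
      (∀ x y, δ x y < 0 → hY y + 1 ≤ hX x) ∧
      (∀ x, |hX x - cX| ≤
        ((min (min (Fintype.card X) (Fintype.card Y))
            (max (Fintype.card X) (Fintype.card Y) - 1) : ℕ) : ℝ)) ∧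
      (∀ y, |hY y - cY| ≤
        ((min (min (Fintype.card X) (Fintype.card Y))
            (max (Fintype.card X) (Fintype.card Y) - 1) : ℕ) : ℝ)) := by
  classical
  set m := Fintype.card X with hmdef
  set n := Fintype.card Y with hndef
  set K : ℕ := min (min m n) (max m n - 1) with hKdef
  have hm : 1 ≤ m := Fintype.card_pos
  have hn : 1 ≤ n := Fintype.card_pos
  have hnodup : ∀ w : List (X ⊕ Y), w.Chain' (dstep δ) → w.Nodup := by
    intro w hc
    by_contra hnd
    obtain ⟨w', hc', hl', hcl'⟩ := closed_of_dup w hc hnd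
    exact hnc w' hc' hl' hcl'
  have hlen2 : ∀ w : List (X ⊕ Y), w.Chain' (dstep δ) → w.length ≤ 2 * min m n + 1 :=
    fun w hc => chain_length_le w hc (hnodup w hc)
  have hlenB : ∀ w : List (X ⊕ Y), w.Chain' (dstep δ) → w.length ≤ m + n := by
    intro w hc
    have := (hnodup w hc).length_le_card
    rwa [Fintype.card_sum] at this
  set B := m + n with hBdef
  set P : (X ⊕ Y) → ℕ → Prop := fun z k => ∃ l, l.length = k ∧ (l ++ [z]).Chain' (dstep δ)
    with hPdef
  set h : (X ⊕ Y) → ℕ := fun z => Nat.findGreatest (P z) B with hhdef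
  have hP0 : ∀ z, P z 0 := fun z => ⟨[], rfl, List.isChain_singleton z⟩
  have hPh : ∀ z, P z (h z) := fun z => Nat.findGreatest_spec (Nat.zero_le B) (hP0 z)
  have hub : ∀ z, h z ≤ 2 * min m n := by
    intro z
    obtain ⟨l, hlen, hch⟩ := hPh z
    have h1 := hlen2 _ hch
    rw [List.length_append, hlen] at h1
    simp at h1
    omega
  have hedge : ∀ a b, dstep δ a b → h a + 1 ≤ h b := by
    intro a b hab
    obtain ⟨l, hlen, hch⟩ := hPh a
    have hch2 : ((l ++ [a]) ++ [b]).Chain' (dstep δ) := by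
      rw [List.Chain', List.isChain_append]
      refine ⟨hch, List.isChain_singleton b, ?_⟩
      intro u hu v hv
      rw [List.getLast?_concat] at hu
      simp only [List.head?_cons, Option.mem_def, Option.some_inj] at hu hv
      rw [← hu, ← hv]
      exact hab
    have hlb : ((l ++ [a]) ++ [b]).length ≤ m + n := hlenB _ hch2
    rw [List.length_append, List.length_append, hlen] at hlb
    simp at hlb
    refine Nat.le_findGreatest (by omega) ⟨l ++ [a], by simp [hlen], hch2⟩
  by_cases hcase : ∀ z, h z ≤ 2 * K
  · refine ⟨fun x => (h (Sum.inl x) : ℝ), fun y => (h (Sum.inr y) : ℝ), (K : ℝ), (K : ℝ),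
      ?_, ?_, ?_, ?_⟩
    · intro x y hδ
      have := hedge _ _ (show dstep δ (Sum.inl x) (Sum.inr y) from hδ)
      show (h (Sum.inl x) : ℝ) + 1 ≤ (h (Sum.inr y) : ℝ)
      exact_mod_cast this
    · intro x y hδ
      have := hedge _ _ (show dstep δ (Sum.inr y) (Sum.inl x) from hδ)
      show (h (Sum.inr y) : ℝ) + 1 ≤ (h (Sum.inl x) : ℝ)
      exact_mod_cast this
    · intro x
      have := nat_abs_cast2 (h (Sum.inl x)) 0 K (Nat.zero_le _) (by simpa using hcase (Sum.inl x))
      show |(h (Sum.inl x) : ℝ) - (K : ℝ)| ≤ (K : ℝ)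
      simpa using this
    · intro y
      have := nat_abs_cast2 (h (Sum.inr y)) 0 K (Nat.zero_le _) (by simpa using hcase (Sum.inr y))
      show |(h (Sum.inr y) : ℝ) - (K : ℝ)| ≤ (K : ℝ)
      simpa using this
  · push_neg at hcase
    obtain ⟨z0, hz0⟩ := hcase
    have hKlt : K < min m n := by
      have := hub z0
      omega
    have hmn : m = n := by
      rcases Nat.le_total m n with hle | hle
      · have e1 : min m n = m := Nat.min_eq_left hle
        have e2 : max m n = n := Nat.max_eq_right hle
        rw [hKdef, e1, e2] at hKlt
        omega
      · have e1 : min m n = n := Nat.min_eq_right hle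
        have e2 : max m n = m := Nat.max_eq_left hle
        rw [hKdef, e1, e2] at hKlt
        omega
    have hK : K = m - 1 := by
      rw [hKdef, ← hmn]
      simp
    -- the realizing path is a Hamiltonian chain
    obtain ⟨l0, hl0len, hl0ch⟩ := hPh z0
    have hz0ub : h z0 + 1 ≤ m + n := by
      have := hlenB _ hl0ch
      rw [List.length_append, hl0len] at this
      simpa using this
    have hz0' : h z0 = 2 * m - 1 := by omega
    set w : List (X ⊕ Y) := l0 ++ [z0] with hwdef
    have hwch : w.Chain' (dstep δ) := hl0ch
    have hwlen : w.length = 2 * m := by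
      rw [hwdef, List.length_append, hl0len, hz0']
      simp
      omega
    have hwnd : w.Nodup := hnodup w hwch
    have hcardZ : Fintype.card (X ⊕ Y) = 2 * m := by
      rw [Fintype.card_sum, ← hmdef, ← hndef]
      omega
    have hwuniv : ∀ z : X ⊕ Y, z ∈ w := by
      have h1 : w.toFinset.card = w.length := List.toFinset_card_of_nodup hwnd
      have h2 : w.toFinset = Finset.univ := by
        refine Finset.eq_univ_of_card _ ?_
        rw [h1, hwlen, hcardZ]
      intro z
      have : z ∈ w.toFinset := by rw [h2]; exact Finset.mem_univ z
      exact List.mem_toFinset.mp this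
    set pos : (X ⊕ Y) → ℕ := fun z => @List.idxOf _ instBEqOfDecidableEq z w with hposdef
    have hposlt : ∀ z, pos z < w.length := by
      intro z
      simp only [hposdef]
      exact (@List.idxOf_lt_length_iff _ instBEqOfDecidableEq _ _ _).mpr (hwuniv z)
    have hget : ∀ z, w[pos z]'(hposlt z) = z := by
      intro z
      simp only [hposdef]
      exact @List.getElem_idxOf _ instBEqOfDecidableEq _ _ _
        ((@List.idxOf_lt_length_iff _ instBEqOfDecidableEq _ _ _).mpr (hwuniv z))
    -- every edge goes forward in the Hamiltonian order
    have hfw : ∀ a b, dstep δ a b → pos a < pos b := by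
      intro a b hab
      by_contra hcon
      push_neg at hcon
      have hne : a ≠ b := dstep_ne hab
      have hposne : pos b ≠ pos a := by
        intro hp
        apply hne
        have h1 := hget a
        have h2 := hget b
        rw [← h1, ← h2]
        congr 1
        exact hp.symm
      have hlt : pos b < pos a := lt_of_le_of_ne hcon hposne
      have hpa := hposlt a
      have hpb := hposlt b
      set seg := (w.drop (pos b)).take (pos a - pos b + 1) with hsegdef
      have hseglen : seg.length = pos a - pos b + 1 := by
        rw [hsegdef, List.length_take, List.length_drop]
        have := hposlt a
        omega
      have hsegch : seg.Chain' (dstep δ) := (hwch.drop _).take _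
      have hseg0 : seg[0]? = some b := by
        rw [hsegdef, List.getElem?_take, if_pos (by omega), List.getElem?_drop]
        have := hget b
        rw [List.getElem?_eq_getElem (by omega : pos b + 0 < w.length)]
        simpa using this
      have hseglast : seg.getLast? = some a := by
        rw [List.getLast?_eq_getElem?, hseglen]
        simp only [Nat.add_sub_cancel]
        rw [hsegdef, List.getElem?_take, if_pos (by omega), List.getElem?_drop]
        have hba : pos b + (pos a - pos b) = pos a := by omega
        rw [hba, List.getElem?_eq_getElem (hposlt a)]
        rw [hget a]
      have hsegne : seg ≠ [] := by
        intro hnil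
        rw [hnil] at hseglen
        simp at hseglen
      have hclosedch : (seg ++ [b]).Chain' (dstep δ) := by
        rw [List.Chain', List.isChain_append]
        refine ⟨hsegch, List.isChain_singleton b, ?_⟩
        intro u hu v hv
        rw [hseglast] at hu
        simp only [List.head?_cons, Option.mem_def, Option.some_inj] at hu hv
        rw [← hu, ← hv]
        exact hab
      have hhead : (seg ++ [b]).head? = some b := by
        match hseg : seg, hseg0 with
        | s0 :: rest, h0 => simp at h0; simp [h0]
      have hlast : (seg ++ [b]).getLast? = some b := List.getLast?_concat
      refine hnc (seg ++ [b]) hclosedch ?_ (by rw [hhead, hlast])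
      rw [List.length_append, hseglen]
      simp
  -- parity of positions
    have hwlenpos : 0 < w.length := by omega
    set b0 : Bool := (w[0]'hwlenpos).isLeft with hb0def
    have hpar : ∀ i, ∀ hi : i < w.length, (w[i]'hi).isLeft = (if i % 2 = 0 then b0 else !b0) := by
      intro i
      induction i with
      | zero => intro hi; simp [hb0def]
      | succ k ih =>
        intro hi
        have hk : k < w.length := by omega
        have hkk : k < w.length - 1 := by omega
        have hstep := List.isChain_iff_getElem.mp hwch k (by omega)
        have hflip := dstep_flip hstep
        rw [hflip, ih hk]
        rcases Nat.mod_two_eq_zero_or_one k with h2 | h2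
        · have h3 : (k + 1) % 2 = 1 := by omega
          simp [h2, h3]
        · have h3 : (k + 1) % 2 = 0 := by omega
          simp [h2, h3]
    set parX : ℕ := if b0 = true then 0 else 1 with hparXdef
    set parY : ℕ := if b0 = true then 1 else 0 with hparYdef
    have hposX : ∀ x : X, pos (Sum.inl x) % 2 = parX := by
      intro x
      have hi := hposlt (Sum.inl x)
      have hp := hpar (pos (Sum.inl x)) hi
      rw [hget (Sum.inl x)] at hp
      simp only [Sum.isLeft] at hp
      rcases Nat.mod_two_eq_zero_or_one (pos (Sum.inl x)) with h2 | h2 <;>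
        cases hb0 : b0 <;> rw [hb0] at hp <;> simp [h2] at hp ⊢ <;> simp [hparXdef, hb0] <;>
          omega
    have hposY : ∀ y : Y, pos (Sum.inr y) % 2 = parY := by
      intro y
      have hi := hposlt (Sum.inr y)
      have hp := hpar (pos (Sum.inr y)) hi
      rw [hget (Sum.inr y)] at hp
      simp only [Sum.isLeft] at hp
      rcases Nat.mod_two_eq_zero_or_one (pos (Sum.inr y)) with h2 | h2 <;>
        cases hb0 : b0 <;> rw [hb0] at hp <;> simp [h2] at hp ⊢ <;> simp [hparYdef, hb0] <;>
          omega
    refine ⟨fun x => (pos (Sum.inl x) : ℝ), fun y => (pos (Sum.inr y) : ℝ),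
      (parX : ℝ) + ((m - 1 : ℕ) : ℝ), (parY : ℝ) + ((m - 1 : ℕ) : ℝ), ?_, ?_, ?_, ?_⟩
    · intro x y hδ
      have := hfw _ _ (show dstep δ (Sum.inl x) (Sum.inr y) from hδ)
      show (pos (Sum.inl x) : ℝ) + 1 ≤ (pos (Sum.inr y) : ℝ)
      exact_mod_cast this
    · intro x y hδ
      have := hfw _ _ (show dstep δ (Sum.inr y) (Sum.inl x) from hδ)
      show (pos (Sum.inr y) : ℝ) + 1 ≤ (pos (Sum.inl x) : ℝ)
      exact_mod_cast this
    · intro x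
      have h2 := hposX x
      have h3 := hposlt (Sum.inl x)
      rw [hwlen] at h3
      have hpar01 : parX = 0 ∨ parX = 1 := by
        rw [hparXdef]
        split <;> simp
      have hb : parX ≤ pos (Sum.inl x) ∧ pos (Sum.inl x) ≤ parX + 2 * (m - 1) := by
        rcases hpar01 with hp | hp <;> rw [hp] at h2 ⊢ <;> constructor <;> omega
      have := nat_abs_cast2 (pos (Sum.inl x)) parX (m - 1) hb.1 hb.2
      show |(pos (Sum.inl x) : ℝ) - ((parX : ℝ) + ((m - 1 : ℕ) : ℝ))| ≤ (K : ℝ)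
      rw [hK]
      exact this
    · intro y
      have h2 := hposY y
      have h3 := hposlt (Sum.inr y)
      rw [hwlen] at h3
      have hpar01 : parY = 0 ∨ parY = 1 := by
        rw [hparYdef]
        split <;> simp
      have hb : parY ≤ pos (Sum.inr y) ∧ pos (Sum.inr y) ≤ parY + 2 * (m - 1) := by
        rcases hpar01 with hp | hp <;> rw [hp] at h2 ⊢ <;> constructor <;> omega
      have := nat_abs_cast2 (pos (Sum.inr y)) parY (m - 1) hb.1 hb.2
      show |(pos (Sum.inr y) : ℝ) - ((parY : ℝ) + ((m - 1 : ℕ) : ℝ))| ≤ (K : ℝ)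
      rw [hK]
      exact this

/-- Summation by parts: a height function with small per-side oscillation bounds the
total mass of `δ` by the marginal discrepancies. -/
lemma sum_by_parts {δ : X → Y → ℝ} (hX : X → ℝ) (hY : Y → ℝ) (cX cY Kr : ℝ)
    (e1 : ∀ x y, 0 < δ x y → hX x + 1 ≤ hY y)
    (e2 : ∀ x y, δ x y < 0 → hY y + 1 ≤ hX x)
    (bX : ∀ x, |hX x - cX| ≤ Kr) (bY : ∀ y, |hY y - cY| ≤ Kr)
    (htot : ∑ x, ∑ y, δ x y = 0) :
    ∑ x, ∑ y, |δ x y| ≤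
      Kr * ((∑ x, |∑ y, δ x y|) + (∑ y, |∑ x, δ x y|)) := by
  have step1 : ∑ x, ∑ y, |δ x y| ≤ ∑ x, ∑ y, δ x y * (hY y - hX x) := by
    refine Finset.sum_le_sum fun x _ => Finset.sum_le_sum fun y _ => ?_
    rcases lt_trichotomy (δ x y) 0 with h | h | h
    · have := e2 x y h
      rw [abs_of_neg h]
      nlinarith
    · simp [h]
    · have := e1 x y h
      rw [abs_of_pos h]
      nlinarith
  have t1 : (∑ y, (hY y - cY) * ∑ x, δ x y) = ∑ x, ∑ y, (hY y - cY) * δ x y := by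
    rw [Finset.sum_comm (f := fun x y => (hY y - cY) * δ x y)]
    exact Finset.sum_congr rfl fun y _ => Finset.mul_sum _ _ _
  have t2 : (∑ x, (hX x - cX) * ∑ y, δ x y) = ∑ x, ∑ y, (hX x - cX) * δ x y :=
    Finset.sum_congr rfl fun x _ => Finset.mul_sum _ _ _
  have t3 : (cY - cX) * (∑ x, ∑ y, δ x y) = ∑ x, ∑ y, (cY - cX) * δ x y := by
    rw [Finset.mul_sum]
    exact Finset.sum_congr rfl fun x _ => Finset.mul_sum _ _ _
  have key : ∑ x, ∑ y, δ x y * (hY y - hX x)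
      = (∑ y, (hY y - cY) * ∑ x, δ x y) - (∑ x, (hX x - cX) * ∑ y, δ x y)
        + (cY - cX) * (∑ x, ∑ y, δ x y) := by
    rw [t1, t2, t3, ← Finset.sum_sub_distrib, ← Finset.sum_add_distrib]
    refine Finset.sum_congr rfl fun x _ => ?_
    rw [← Finset.sum_sub_distrib, ← Finset.sum_add_distrib]
    refine Finset.sum_congr rfl fun y _ => ?_
    ring
  have step3 : (∑ y, (hY y - cY) * ∑ x, δ x y) ≤ Kr * ∑ y, |∑ x, δ x y| := by
    rw [Finset.mul_sum]
    refine Finset.sum_le_sum fun y _ => ?_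
    calc (hY y - cY) * ∑ x, δ x y ≤ |(hY y - cY) * ∑ x, δ x y| := le_abs_self _
      _ = |hY y - cY| * |∑ x, δ x y| := abs_mul _ _
      _ ≤ Kr * |∑ x, δ x y| := mul_le_mul_of_nonneg_right (bY y) (abs_nonneg _)
  have step4 : -(∑ x, (hX x - cX) * ∑ y, δ x y) ≤ Kr * ∑ x, |∑ y, δ x y| := by
    rw [← Finset.sum_neg_distrib, Finset.mul_sum]
    refine Finset.sum_le_sum fun x _ => ?_
    calc -((hX x - cX) * ∑ y, δ x y) ≤ |(hX x - cX) * ∑ y, δ x y| := neg_le_abs _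
      _ = |hX x - cX| * |∑ y, δ x y| := abs_mul _ _
      _ ≤ Kr * |∑ y, δ x y| := mul_le_mul_of_nonneg_right (bX x) (abs_nonneg _)
  rw [key, htot, mul_zero, add_zero] at step1
  rw [mul_add]
  linarith

/-- Existence of an optimal coupling for `(p', q')` minimizing the ℓ¹ distance to `γ`
among all optimal couplings. -/
lemma exists_min_optimal (c : X → Y → ℝ) {p' : X → ℝ} {q' : Y → ℝ}
    (hp' : IsProbVec p') (hq' : IsProbVec q') (γ : X → Y → ℝ) :
    ∃ γ' : X → Y → ℝ, IsOptimalCoupling c γ' p' q' ∧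
      ∀ η, IsOptimalCoupling c η p' q' →
        ∑ x, ∑ y, |γ' x y - γ x y| ≤ ∑ x, ∑ y, |η x y - γ x y| := by
  classical
  set C : Set (X → Y → ℝ) := {η | IsCoupling η p' q'} with hCdef
  have hCne : C.Nonempty := by
    refine ⟨fun x y => p' x * q' y, ⟨fun x y => mul_nonneg (hp'.1 x) (hq'.1 y), fun x => ?_,
      fun y => ?_⟩⟩
    · rw [← Finset.mul_sum, hq'.2, mul_one]
    · rw [← Finset.sum_mul, hp'.2, one_mul]
  have happly : ∀ (x : X) (y : Y), Continuous fun η : X → Y → ℝ => η x y := fun x y =>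
    (continuous_apply y).comp (continuous_apply x)
  have hCclosed : IsClosed C := by
    have hC1 : IsClosed (⋂ (x : X) (y : Y), {η : X → Y → ℝ | 0 ≤ η x y}) :=
      isClosed_iInter fun x => isClosed_iInter fun y =>
        isClosed_le continuous_const (happly x y)
    have hC2 : IsClosed (⋂ (x : X), {η : X → Y → ℝ | ∑ y, η x y = p' x}) :=
      isClosed_iInter fun x =>
        isClosed_eq (continuous_finset_sum _ fun y _ => happly x y) continuous_const
    have hC3 : IsClosed (⋂ (y : Y), {η : X → Y → ℝ | ∑ x, η x y = q' y}) :=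
      isClosed_iInter fun y =>
        isClosed_eq (continuous_finset_sum _ fun x _ => happly x y) continuous_const
    have : C = (⋂ (x : X) (y : Y), {η : X → Y → ℝ | 0 ≤ η x y}) ∩
        ((⋂ (x : X), {η : X → Y → ℝ | ∑ y, η x y = p' x}) ∩
          (⋂ (y : Y), {η : X → Y → ℝ | ∑ x, η x y = q' y})) := by
      ext η
      simp only [hCdef, Set.mem_setOf_eq, Set.mem_inter_iff, Set.mem_iInter, IsCoupling]
    rw [this]
    exact hC1.inter (hC2.inter hC3)
  have hbox : IsCompact (Set.univ.pi fun _ : X => Set.univ.pi fun _ : Y => Set.Icc (0:ℝ) 1) :=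
    isCompact_univ_pi fun _ => isCompact_univ_pi fun _ => isCompact_Icc
  have hsub : C ⊆ Set.univ.pi fun _ : X => Set.univ.pi fun _ : Y => Set.Icc (0:ℝ) 1 := by
    intro η hη
    rw [Set.mem_univ_pi]
    intro x
    rw [Set.mem_univ_pi]
    intro y
    refine ⟨hη.1 x y, ?_⟩
    have h1 : η x y ≤ ∑ y', η x y' :=
      Finset.single_le_sum (f := fun y' => η x y') (fun y' _ => hη.1 x y') (Finset.mem_univ y)
    have h2 : p' x ≤ 1 := by
      rw [← hp'.2]
      exact Finset.single_le_sum (f := fun x' => p' x') (fun x' _ => hp'.1 x') (Finset.mem_univ x)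
    rw [hη.2.1 x] at h1
    linarith
  have hCcomp : IsCompact C := hbox.of_isClosed_subset hCclosed hsub
  have hcost : Continuous (transportCost c) := by
    unfold transportCost
    exact continuous_finset_sum _ fun x _ => continuous_finset_sum _ fun y _ =>
      continuous_const.mul (happly x y)
  obtain ⟨γ0, hγ0C, hγ0min⟩ := hCcomp.exists_isMinOn hCne hcost.continuousOn
  have hγ0opt : IsOptimalCoupling c γ0 p' q' := ⟨hγ0C, fun η hη => hγ0min hη⟩
  set S : Set (X → Y → ℝ) := {η | IsOptimalCoupling c η p' q'} with hSdef
  have hSeq : S = C ∩ {η | transportCost c η ≤ transportCost c γ0} := by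
    ext η
    constructor
    · intro hη
      exact ⟨hη.1, hη.2 γ0 hγ0C⟩
    · intro ⟨hη1, hη2⟩
      exact ⟨hη1, fun η2 h2 => le_trans hη2 (hγ0min h2)⟩
  have hScomp : IsCompact S := by
    rw [hSeq]
    exact hCcomp.inter_right (isClosed_le hcost continuous_const)
  have hSne : S.Nonempty := ⟨γ0, hγ0opt⟩
  have hF : Continuous fun η : X → Y → ℝ => ∑ x, ∑ y, |η x y - γ x y| :=
    continuous_finset_sum _ fun x _ => continuous_finset_sum _ fun y _ =>
      ((happly x y).sub continuous_const).abs
  obtain ⟨γ', hγ'S, hγ'min⟩ := hScomp.exists_isMinOn hSne hF.continuousOn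
  exact ⟨γ', hγ'S, fun η hη => hγ'min hη⟩

end OTStab


/-- Lipschitz continuity of the solution set of finite optimal
transport in the marginals. -/
theorem lipschitz_solution_set {X Y : Type*} [Fintype X] [Fintype Y]
    [Nonempty X] [Nonempty Y]
    (c : X → Y → ℝ) (p p' : X → ℝ) (q q' : Y → ℝ)
    (hp : IsProbVec p) (hp' : IsProbVec p') (hq : IsProbVec q) (hq' : IsProbVec q')
    (γ : X → Y → ℝ) (hγ : IsOptimalCoupling c γ p q) :
    ∃ γ' : X → Y → ℝ, IsOptimalCoupling c γ' p' q' ∧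
      tv2 γ' γ ≤
        ((min (min (Fintype.card X) (Fintype.card Y))
            (max (Fintype.card X) (Fintype.card Y) - 1) : ℕ) : ℝ) *
          (tv p' p + tv q' q) := by
  classical
  obtain ⟨γ', hγ'opt, hγ'min⟩ := OTStab.exists_min_optimal c hp' hq' γ
  refine ⟨γ', hγ'opt, ?_⟩
  set δ : X → Y → ℝ := fun x y => γ' x y - γ x y with hδdef
  have hnc : ∀ w : List (X ⊕ Y), w.Chain' (OTStab.dstep δ) → 2 ≤ w.length →
      w.head? ≠ w.getLast? := by
    intro w hw hl hcl
    exact OTStab.no_conformal_cycle hγ hγ'opt hγ'min hw hl hcl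
  obtain ⟨hX, hY, cX, cY, e1, e2, bX, bY⟩ := OTStab.exists_heights hnc
  have hrow : ∀ x, ∑ y, δ x y = p' x - p x := by
    intro x
    rw [hδdef]
    simp only
    rw [Finset.sum_sub_distrib, hγ'opt.1.2.1 x, hγ.1.2.1 x]
  have hcol : ∀ y, ∑ x, δ x y = q' y - q y := by
    intro y
    rw [hδdef]
    simp only
    rw [Finset.sum_sub_distrib, hγ'opt.1.2.2 y, hγ.1.2.2 y]
  have htot : ∑ x, ∑ y, δ x y = 0 := by
    rw [Finset.sum_congr rfl fun x _ => hrow x, Finset.sum_sub_distrib, hp'.2, hp.2, sub_self]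
  have key := OTStab.sum_by_parts hX hY cX cY _ e1 e2 bX bY htot
  have hR : ∑ x, |∑ y, δ x y| = 2 * tv p' p := by
    rw [tv, Finset.sum_congr rfl fun x (_ : x ∈ Finset.univ) => by rw [hrow x]]
    ring
  have hC : ∑ y, |∑ x, δ x y| = 2 * tv q' q := by
    rw [tv, Finset.sum_congr rfl fun y (_ : y ∈ Finset.univ) => by rw [hcol y]]
    ring
  rw [hR, hC] at key
  have htv2 : tv2 γ' γ = (∑ x, ∑ y, |δ x y|) / 2 := rfl
  rw [htv2]
  set Kr : ℝ := ((min (min (Fintype.card X) (Fintype.card Y))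
      (max (Fintype.card X) (Fintype.card Y) - 1) : ℕ) : ℝ) with hKrdef
  linarith
end

section
/- Let Z be a finite nonempty set, ∼ an equivalence relation on Z, c : Z × Z → ℝ a cost function, and p, q ∈ Δ(Z). Let D_∼ = {(z,z') ∈ Z × Z : z ∼ z'}. If D_∼ is c-cyclically monotone, then there exists a c-optimal coupling γ of p and q such that 1 − Σ_{(z,z')∈D_∼} γ(z,z') ≤ (|Z/∼| − 1)·‖proj_∼ q − proj_∼ p‖, where Z/∼ is the set of equivalence classes and proj_∼ p ∈ Δ(Z/∼) is defined by (proj_∼ p)([z]) = Σ_{z' ∼ z} p(z'). -/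
open Finset

/-- Projection of a probability vector on `Z` to the quotient `Z/∼`:
`(proj s p)([z]) = Σ_{z' ∼ z} p z'`. -/
noncomputable def projQ {Z : Type*} [Fintype Z] (s : Setoid Z)
    [DecidableEq (Quotient s)] (p : Z → ℝ) : Quotient s → ℝ :=
  fun cls => ∑ z ∈ Finset.univ.filter (fun z => Quotient.mk s z = cls), p z


/-- The in-class ("related") mass of a coupling. -/
noncomputable def relMass {Z : Type*} [Fintype Z] (s : Setoid Z) [DecidableRel s.r]
    (γ : Z → Z → ℝ) : ℝ :=
  ∑ z, ∑ z', if s.r z z' then γ z z' else 0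


lemma indicator_sum_le {ι : Type*} [Fintype ι] (a : ι → ℝ) (h : ∑ i, a i = 0)
    (cond : ι → Prop) [DecidablePred cond] :
    ∑ i, (if cond i then a i else 0) ≤ (∑ i, |a i|) / 2 := by
  have h1 : ∑ i, (if cond i then a i else 0) ≤ ∑ i, (a i + |a i|) / 2 := by
    apply Finset.sum_le_sum
    intro i _
    have := abs_nonneg (a i)
    have := neg_abs_le (a i)
    have := le_abs_self (a i)
    split <;> linarith
  calc ∑ i, (if cond i then a i else 0) ≤ ∑ i, (a i + |a i|) / 2 := h1
    _ = (∑ i, a i + ∑ i, |a i|) / 2 := by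
        rw [← Finset.sum_add_distrib, ← Finset.sum_div]
    _ = (∑ i, |a i|) / 2 := by rw [h, zero_add]


def EdgeRel {Z : Type*} (s : Setoid Z) (γ : Z → Z → ℝ) : Quotient s → Quotient s → Prop :=
  fun k l => k ≠ l ∧ ∃ a b, Quotient.mk s a = k ∧ Quotient.mk s b = l ∧ 0 < γ a b

lemma exists_rank {Z : Type*} [Fintype Z] (s : Setoid Z) [Fintype (Quotient s)] (γ : Z → Z → ℝ)
    (hirr : ∀ k : Quotient s, ¬ Relation.TransGen (EdgeRel s γ) k k) :
    ∃ φ : Quotient s → ℕ, (∀ k, φ k < Fintype.card (Quotient s)) ∧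
      ∀ a b : Z, 0 < γ a b → ¬ s.r a b →
        φ (Quotient.mk s a) < φ (Quotient.mk s b) := by
  classical
  set E := EdgeRel s γ with hE
  refine ⟨fun k => (univ.filter (fun k' => Relation.TransGen E k' k)).card, ?_, ?_⟩
  · intro k
    have hsub : univ.filter (fun k' => Relation.TransGen E k' k) ⊆ univ.erase k := by
      intro k' hk'
      simp only [mem_filter, mem_univ, true_and] at hk'
      apply Finset.mem_erase_of_ne_of_mem _ (mem_univ _)
      rintro rfl; exact hirr _ hk'
    calc (univ.filter (fun k' => Relation.TransGen E k' k)).card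
        ≤ (univ.erase k).card := Finset.card_le_card hsub
      _ < univ.card := Finset.card_erase_lt_of_mem (mem_univ k)
      _ = Fintype.card (Quotient s) := rfl
  · intro a b hab hnr
    have hedge : E (Quotient.mk s a) (Quotient.mk s b) :=
      ⟨fun he => hnr (Quotient.exact he), a, b, rfl, rfl, hab⟩
    apply Finset.card_lt_card
    constructor
    · intro k' hk'
      simp only [mem_filter, mem_univ, true_and] at hk' ⊢
      exact hk'.tail hedge
    · intro hsub
      have : Quotient.mk s a ∈ univ.filter
          (fun k' => Relation.TransGen E k' (Quotient.mk s b)) := by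
        simp only [mem_filter, mem_univ, true_and]
        exact Relation.TransGen.single hedge
      have := hsub this
      simp only [mem_filter, mem_univ, true_and] at this
      exact hirr _ this

lemma walk_of_transGen {Z : Type*} [Fintype Z] (s : Setoid Z) (γ : Z → Z → ℝ) {a b : Quotient s}
    (h : Relation.TransGen (EdgeRel s γ) a b) :
    ∃ n : ℕ, ∃ z z' : Fin (n + 1) → Z,
      Quotient.mk s (z 0) = a ∧ Quotient.mk s (z' (Fin.last n)) = b ∧
      (∀ j, 0 < γ (z j) (z' j)) ∧ (∀ j, ¬ s.r (z j) (z' j)) ∧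
      (∀ j : Fin n, s.r (z' j.castSucc) (z j.succ)) := by
  induction h with
  | single h =>
    obtain ⟨hne, a₀, b₀, ha, hb, hpos⟩ := h
    refine ⟨0, fun _ => a₀, fun _ => b₀, ha, hb, fun _ => hpos, fun _ hr => ?_, fun j => j.elim0⟩
    exact hne (ha ▸ hb ▸ Quotient.sound hr)
  | tail h₁ h₂ ih =>
    obtain ⟨n, z, z', hz0, hzl, hpos, hnr, hlink⟩ := ih
    obtain ⟨hne, w, w', hw, hw', hposw⟩ := h₂
    refine ⟨n + 1, Fin.snoc z w, Fin.snoc z' w', ?_, ?_, ?_, ?_, ?_⟩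
    · have h0 : (0 : Fin (n + 2)) = Fin.castSucc 0 := rfl
      rw [h0, Fin.snoc_castSucc]; exact hz0
    · rw [Fin.snoc_last]; exact hw'
    · intro j
      refine Fin.lastCases ?_ ?_ j
      · rw [Fin.snoc_last, Fin.snoc_last]; exact hposw
      · intro i; rw [Fin.snoc_castSucc, Fin.snoc_castSucc]; exact hpos i
    · intro j
      refine Fin.lastCases ?_ ?_ j
      · rw [Fin.snoc_last, Fin.snoc_last]
        intro hr
        exact hne (hw ▸ hw' ▸ Quotient.sound hr)
      · intro i; rw [Fin.snoc_castSucc, Fin.snoc_castSucc]; exact hnr i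
    · intro j
      refine Fin.lastCases ?_ ?_ j
      · rw [Fin.succ_last, Fin.snoc_castSucc, Fin.snoc_last]
        exact Quotient.exact (hzl.trans hw.symm)
      · intro i
        rw [Fin.snoc_castSucc, Fin.succ_castSucc, Fin.snoc_castSucc]
        exact hlink i


section Reroute
variable {Z : Type*} [Fintype Z] (s : Setoid Z) [DecidableRel s.r] (c : Z → Z → ℝ) (p q : Z → ℝ)

lemma reroute (hS : CyclMono c {zz : Z × Z | s.r zz.1 zz.2})
    (γ : Z → Z → ℝ) (hopt : IsOptimalCoupling c γ p q)
    (hmax : ∀ γ', IsOptimalCoupling c γ' p q → relMass s γ' ≤ relMass s γ)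
    (m : ℕ) (z z' : Fin (m + 2) → Z)
    (hpos : ∀ j, 0 < γ (z j) (z' j))
    (hnr : ∀ j, ¬ s.r (z j) (z' j))
    (hlink : ∀ j, s.r (z' j) (z (j + 1))) : False := by
  classical
  obtain ⟨⟨hγ0, hγp, hγq⟩, hγopt⟩ := hopt
  have hne : (univ : Finset (Fin (m + 2))).Nonempty := univ_nonempty
  set δ : ℝ := univ.inf' hne (fun j => γ (z j) (z' j)) with hδ
  have hδpos : 0 < δ := by
    rw [hδ, Finset.lt_inf'_iff]
    exact fun j _ => hpos j
  have hδle : ∀ j, δ ≤ γ (z j) (z' j) := fun j => Finset.inf'_le _ (mem_univ j)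
  set ε : ℝ := δ / (m + 2) with hε
  have hεpos : 0 < ε := by positivity
  have hεδ : ε * (m + 2) = δ := by
    rw [hε]; field_simp
  -- elementary indicator
  set e : Z → Z → Z → Z → ℝ :=
    fun a b x y => (if a = x then (1:ℝ) else 0) * (if b = y then 1 else 0) with he
  have he_nonneg : ∀ a b x y, 0 ≤ e a b x y := by
    intro a b x y; rw [he]; positivity
  have he_le_one : ∀ a b x y, e a b x y ≤ 1 := by
    intro a b x y; simp only [he]; split <;> split <;> norm_num
  have he_ne : ∀ a b x y, e a b x y ≠ 0 → a = x ∧ b = y := by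
    intro a b x y h; simp only [he] at h
    constructor
    · by_contra hc; simp [hc] at h
    · by_contra hc; simp [hc] at h
  have hsum_y : ∀ a b x, ∑ y, e a b x y = if a = x then 1 else 0 := by
    intro a b x
    simp only [he, ← Finset.mul_sum, Finset.sum_ite_eq, mem_univ, if_true, mul_one]
  have hsum_x : ∀ a b y, ∑ x, e a b x y = if b = y then 1 else 0 := by
    intro a b y
    simp only [he, ← Finset.sum_mul, Finset.sum_ite_eq, mem_univ, if_true, one_mul]
  have hfe : ∀ (f : Z → Z → ℝ) a b, ∑ x, ∑ y, f x y * e a b x y = f a b := by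
    intro f a b
    simp [he, mul_ite, ite_mul, Finset.sum_ite_eq]
  set γ' : Z → Z → ℝ := fun x y =>
    γ x y + ε * ∑ j : Fin (m + 2), (e (z (j + 1)) (z' j) x y - e (z j) (z' j) x y) with hγ'def
  have hd : ∀ f : Z → Z → ℝ, (∑ x, ∑ y, f x y *
      ∑ j : Fin (m + 2), (e (z (j + 1)) (z' j) x y - e (z j) (z' j) x y)) =
      ∑ j : Fin (m + 2), (f (z (j + 1)) (z' j) - f (z j) (z' j)) := by
    intro f
    have h1 : ∀ x, ∑ y, f x y * ∑ j : Fin (m + 2), (e (z (j + 1)) (z' j) x y - e (z j) (z' j) x y)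
        = ∑ j : Fin (m + 2), ∑ y, (f x y * e (z (j + 1)) (z' j) x y - f x y * e (z j) (z' j) x y) := by
      intro x
      rw [Finset.sum_comm]
      exact Finset.sum_congr rfl fun y _ => by
        rw [Finset.mul_sum]; exact Finset.sum_congr rfl fun j _ => by ring
    rw [Finset.sum_congr rfl fun x _ => h1 x, Finset.sum_comm]
    refine Finset.sum_congr rfl fun j _ => ?_
    have : ∀ x, ∑ y, (f x y * e (z (j + 1)) (z' j) x y - f x y * e (z j) (z' j) x y)
        = (∑ y, f x y * e (z (j + 1)) (z' j) x y) - ∑ y, f x y * e (z j) (z' j) x y :=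
      fun x => Finset.sum_sub_distrib _ _
    rw [Finset.sum_congr rfl fun x _ => this x, Finset.sum_sub_distrib, hfe, hfe]
  have hexp : ∀ f : Z → Z → ℝ, (∑ x, ∑ y, f x y * γ' x y) =
      (∑ x, ∑ y, f x y * γ x y) +
        ε * ∑ j : Fin (m + 2), (f (z (j + 1)) (z' j) - f (z j) (z' j)) := by
    intro f
    have h1 : ∀ x y, f x y * γ' x y = f x y * γ x y +
        ε * (f x y * ∑ j : Fin (m + 2), (e (z (j + 1)) (z' j) x y - e (z j) (z' j) x y)) := by
      intro x y; rw [hγ'def]; ring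
    calc (∑ x, ∑ y, f x y * γ' x y)
        = ∑ x, ∑ y, (f x y * γ x y +
            ε * (f x y * ∑ j : Fin (m + 2), (e (z (j + 1)) (z' j) x y - e (z j) (z' j) x y))) :=
          Finset.sum_congr rfl fun x _ => Finset.sum_congr rfl fun y _ => h1 x y
      _ = (∑ x, ∑ y, f x y * γ x y) + ε * ∑ x, ∑ y, f x y *
            ∑ j : Fin (m + 2), (e (z (j + 1)) (z' j) x y - e (z j) (z' j) x y) := by
          rw [Finset.mul_sum, ← Finset.sum_add_distrib]
          refine Finset.sum_congr rfl fun x _ => ?_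
          rw [Finset.mul_sum, ← Finset.sum_add_distrib]
      _ = _ := by rw [hd f]
  -- γ' is a coupling
  have hre : ∀ g : Fin (m + 2) → ℝ, ∑ j : Fin (m + 2), g (j + 1) = ∑ j, g j :=
    fun g => Fintype.sum_equiv (Equiv.addRight 1) _ _ (fun j => rfl)
  have hcoup' : IsCoupling γ' p q := by
    refine ⟨?_, ?_, ?_⟩
    · intro x y
      have hNO : γ' x y = γ x y +
          ε * ((∑ j : Fin (m + 2), e (z (j + 1)) (z' j) x y) -
            ∑ j : Fin (m + 2), e (z j) (z' j) x y) := by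
        rw [hγ'def]; simp only; rw [Finset.sum_sub_distrib]
      have hN0 : 0 ≤ ∑ j : Fin (m + 2), e (z (j + 1)) (z' j) x y :=
        Finset.sum_nonneg fun j _ => he_nonneg _ _ _ _
      have hOle : (∑ j : Fin (m + 2), e (z j) (z' j) x y) ≤ (m : ℝ) + 2 := by
        calc (∑ j : Fin (m + 2), e (z j) (z' j) x y) ≤ ∑ _j : Fin (m + 2), (1 : ℝ) :=
              Finset.sum_le_sum fun j _ => he_le_one _ _ _ _
          _ = (m : ℝ) + 2 := by simp
      by_cases hO : ∀ j : Fin (m + 2), e (z j) (z' j) x y = 0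
      · have hOz : (∑ j : Fin (m + 2), e (z j) (z' j) x y) = 0 :=
          Finset.sum_eq_zero fun j _ => hO j
        rw [hNO, hOz]
        have := hγ0 x y
        nlinarith
      · push_neg at hO
        obtain ⟨j, hj⟩ := hO
        obtain ⟨hzx, hzy⟩ := he_ne _ _ _ _ hj
        have hγxy : δ ≤ γ x y := hzx ▸ hzy ▸ hδle j
        have hOb : ε * (∑ j : Fin (m + 2), e (z j) (z' j) x y) ≤ δ := by
          calc ε * (∑ j : Fin (m + 2), e (z j) (z' j) x y) ≤ ε * ((m : ℝ) + 2) := by nlinarith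
            _ = δ := hεδ
        rw [hNO]
        nlinarith
    · intro x
      have h2 : ∑ y, γ' x y = p x +
          ε * ∑ j : Fin (m + 2), ((if z (j + 1) = x then (1:ℝ) else 0) - if z j = x then 1 else 0) := by
        rw [hγ'def]; simp only
        rw [Finset.sum_add_distrib, hγp x, ← Finset.mul_sum]
        congr 2
        rw [Finset.sum_comm]
        refine Finset.sum_congr rfl fun j _ => ?_
        rw [Finset.sum_sub_distrib, hsum_y, hsum_y]
      rw [h2, Finset.sum_sub_distrib, hre (fun j => if z j = x then (1:ℝ) else 0)]
      ring
    · intro y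
      have h2 : ∑ x, γ' x y = q y +
          ε * ∑ j : Fin (m + 2), ((if z' j = y then (1:ℝ) else 0) - if z' j = y then 1 else 0) := by
        rw [hγ'def]; simp only
        rw [Finset.sum_add_distrib, hγq y, ← Finset.mul_sum]
        congr 2
        rw [Finset.sum_comm]
        refine Finset.sum_congr rfl fun j _ => ?_
        rw [Finset.sum_sub_distrib, hsum_x, hsum_x]
      rw [h2]
      simp
  -- cost does not increase
  have hCM : ∑ j : Fin (m + 2), c (z (j + 1)) (z' j) ≤ ∑ j : Fin (m + 2), c (z j) (z' j) := by
    have h2 := hS m (fun j => z (j + 1)) z' (fun j => Setoid.symm (hlink j))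
    have h3 : ∑ j : Fin (m + 2), c (z (j + 1)) (z' (j + 1)) = ∑ j : Fin (m + 2), c (z j) (z' j) :=
      hre (fun j => c (z j) (z' j))
    calc ∑ j : Fin (m + 2), c (z (j + 1)) (z' j) ≤ ∑ j : Fin (m + 2), c (z (j + 1)) (z' (j + 1)) := h2
      _ = _ := h3
  have hcost : transportCost c γ' ≤ transportCost c γ := by
    show (∑ x, ∑ y, c x y * γ' x y) ≤ ∑ x, ∑ y, c x y * γ x y
    rw [hexp c]
    have h4 : (∑ j : Fin (m + 2), (c (z (j + 1)) (z' j) - c (z j) (z' j))) ≤ 0 := by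
      rw [Finset.sum_sub_distrib]; linarith
    nlinarith
  have hopt' : IsOptimalCoupling c γ' p q :=
    ⟨hcoup', fun γ'' h'' => le_trans hcost (hγopt γ'' h'')⟩
  -- related mass strictly increases
  have hχ : ∀ g : Z → Z → ℝ, (∑ x, ∑ y, if s.r x y then g x y else 0)
      = ∑ x, ∑ y, (if s.r x y then (1:ℝ) else 0) * g x y :=
    fun g => Finset.sum_congr rfl fun x _ => Finset.sum_congr rfl fun y _ => by
      split <;> simp
  have hrel : relMass s γ' = relMass s γ + ε * ((m : ℝ) + 2) := by
    rw [relMass, relMass, hχ γ', hχ γ, hexp (fun x y => if s.r x y then (1:ℝ) else 0)]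
    congr 1
    have h5 : ∀ j : Fin (m + 2),
        ((if s.r (z (j + 1)) (z' j) then (1:ℝ) else 0) - if s.r (z j) (z' j) then (1:ℝ) else 0)
          = 1 := by
      intro j
      have h1 : s.r (z (j + 1)) (z' j) := Setoid.symm (hlink j)
      simp [h1, hnr j]
    rw [Finset.sum_congr rfl fun j _ => h5 j]
    simp
  have := hmax γ' hopt'
  rw [hrel] at this
  nlinarith

end Reroute

lemma no_cycle {Z : Type*} [Fintype Z] (s : Setoid Z) [DecidableRel s.r]
    (c : Z → Z → ℝ) (p q : Z → ℝ)
    (hS : CyclMono c {zz : Z × Z | s.r zz.1 zz.2})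
    (γ : Z → Z → ℝ) (hopt : IsOptimalCoupling c γ p q)
    (hmax : ∀ γ', IsOptimalCoupling c γ' p q → relMass s γ' ≤ relMass s γ)
    (k : Quotient s) : ¬ Relation.TransGen (EdgeRel s γ) k k := by
  intro h
  obtain ⟨n, z, z', hz0, hzl, hpos, hnr, hlink⟩ := walk_of_transGen s γ h
  have hclose : s.r (z' (Fin.last n)) (z 0) := Quotient.exact (hzl.trans hz0.symm)
  match n, z, z', hpos, hnr, hlink, hclose with
  | 0, z, z', hpos, hnr, hlink, hclose =>
    exact hnr 0 (Setoid.symm hclose)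
  | (m + 1), z, z', hpos, hnr, hlink, hclose =>
    refine reroute s c p q hS γ hopt hmax m z z' hpos hnr ?_
    intro j
    refine Fin.lastCases ?_ ?_ j
    · rw [Fin.last_add_one]; exact hclose
    · intro i; rw [Fin.coeSucc_eq_succ]; exact hlink i

lemma aux_exists {Z : Type*} [Fintype Z] (s : Setoid Z) [DecidableRel s.r]
    (c : Z → Z → ℝ) (p q : Z → ℝ) (hp : IsProbVec p) (hq : IsProbVec q) :
    ∃ γ, IsOptimalCoupling c γ p q ∧ ∀ γ', IsOptimalCoupling c γ' p q →
      relMass s γ' ≤ relMass s γ := by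
  classical
  obtain ⟨hp0, hp1⟩ := hp
  obtain ⟨hq0, hq1⟩ := hq
  have hev : ∀ (x y : Z), Continuous fun γ : Z → Z → ℝ => γ x y :=
    fun x y => (continuous_apply y).comp (continuous_apply x)
  have hcostc : Continuous fun γ : Z → Z → ℝ => transportCost c γ := by
    unfold transportCost
    exact continuous_finset_sum _ fun x _ => continuous_finset_sum _ fun y _ =>
      continuous_const.mul (hev x y)
  have hrelc : Continuous fun γ : Z → Z → ℝ => relMass s γ := by
    unfold relMass
    refine continuous_finset_sum _ fun x _ => continuous_finset_sum _ fun y _ => ?_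
    split_ifs with h
    · exact hev x y
    · exact continuous_const
  set S : Set (Z → Z → ℝ) := {γ | IsCoupling γ p q} with hSdef
  have hSne : S.Nonempty := by
    refine ⟨fun x y => p x * q y, ⟨fun x y => mul_nonneg (hp0 x) (hq0 y), fun x => ?_, fun y => ?_⟩⟩
    · rw [← Finset.mul_sum, hq1, mul_one]
    · rw [← Finset.sum_mul, hp1, one_mul]
  have hSc : IsClosed S := by
    have h1 : S = (⋂ (x) (y), {γ : Z → Z → ℝ | 0 ≤ γ x y}) ∩
        ((⋂ x, {γ : Z → Z → ℝ | ∑ y, γ x y = p x}) ∩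
          ⋂ y, {γ : Z → Z → ℝ | ∑ x, γ x y = q y}) := by
      ext γ
      simp only [hSdef, Set.mem_setOf_eq, Set.mem_inter_iff, Set.mem_iInter, IsCoupling]
    rw [h1]
    refine IsClosed.inter ?_ (IsClosed.inter ?_ ?_)
    · exact isClosed_iInter fun x => isClosed_iInter fun y =>
        isClosed_le continuous_const (hev x y)
    · exact isClosed_iInter fun x => isClosed_eq
        (continuous_finset_sum _ fun y _ => hev x y) continuous_const
    · exact isClosed_iInter fun y => isClosed_eq
        (continuous_finset_sum _ fun x _ => hev x y) continuous_const
  have hSb : S ⊆ Set.univ.pi fun _x : Z => Set.univ.pi fun _y : Z => Set.Icc (0:ℝ) 1 := by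
    intro γ hγ
    obtain ⟨h0, hr, _⟩ := hγ
    simp only [Set.mem_pi, Set.mem_univ, forall_true_left, Set.mem_Icc]
    intro x y
    refine ⟨h0 x y, ?_⟩
    have h2 : γ x y ≤ ∑ y', γ x y' := Finset.single_le_sum (fun y' _ => h0 x y') (mem_univ y)
    have h3 : p x ≤ ∑ z, p z := Finset.single_le_sum (fun z _ => hp0 z) (mem_univ x)
    rw [hr x] at h2
    rw [hp1] at h3
    linarith
  have hScomp : IsCompact S :=
    IsCompact.of_isClosed_subset
      (isCompact_univ_pi fun _x => isCompact_univ_pi fun _y => isCompact_Icc) hSc hSb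
  obtain ⟨γ₁, hγ₁S, hγ₁min⟩ := hScomp.exists_isMinOn hSne hcostc.continuousOn
  have hγ₁min' : ∀ γ' ∈ S, transportCost c γ₁ ≤ transportCost c γ' := fun γ' h' =>
    isMinOn_iff.mp hγ₁min γ' h'
  set S₂ : Set (Z → Z → ℝ) := S ∩ {γ | transportCost c γ = transportCost c γ₁} with hS₂def
  have hS₂comp : IsCompact S₂ := hScomp.inter_right (isClosed_eq hcostc continuous_const)
  have hS₂ne : S₂.Nonempty := ⟨γ₁, hγ₁S, rfl⟩
  obtain ⟨γ₂, hγ₂S, hγ₂min⟩ := hS₂comp.exists_isMinOn hS₂ne (hrelc.neg).continuousOn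
  have hγ₂min' : ∀ γ' ∈ S₂, -relMass s γ₂ ≤ -relMass s γ' := fun γ' h' =>
    isMinOn_iff.mp hγ₂min γ' h'
  refine ⟨γ₂, ⟨hγ₂S.1, fun γ'' h'' => ?_⟩, ?_⟩
  · have h5 : transportCost c γ₂ = transportCost c γ₁ := hγ₂S.2
    rw [h5]
    exact hγ₁min' γ'' h''
  · intro γ' hopt'
    have hγ'S₂ : γ' ∈ S₂ :=
      ⟨hopt'.1, le_antisymm (hopt'.2 γ₁ hγ₁S) (hγ₁min' γ' hopt'.1)⟩
    have := hγ₂min' γ' hγ'S₂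
    linarith

/-- Bound on mass moved under projection. If
`D_∼ = {(z,z') : z ∼ z'}` is `c`-cyclically monotone, some `c`-optimal coupling
of `p` and `q` moves mass across `∼`-classes with probability at most
`(|Z/∼| − 1)·‖proj_∼ q − proj_∼ p‖`. -/
theorem mass_moved_bound_quotient {Z : Type*} [Fintype Z] [Nonempty Z]
    (s : Setoid Z) [DecidableRel s.r] [DecidableEq (Quotient s)]
    [Fintype (Quotient s)]
    (c : Z → Z → ℝ) (p q : Z → ℝ) (hp : IsProbVec p) (hq : IsProbVec q)
    (hS : CyclMono c {zz : Z × Z | s.r zz.1 zz.2}) :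
    ∃ γ : Z → Z → ℝ, IsOptimalCoupling c γ p q ∧
      1 - ∑ z, ∑ z', (if s.r z z' then γ z z' else 0) ≤
        ((Fintype.card (Quotient s) : ℝ) - 1) * tv (projQ s q) (projQ s p) := by
  classical
  obtain ⟨γ, hopt, hmax⟩ := aux_exists s c p q hp hq
  obtain ⟨⟨hγ0, hγp, hγq⟩, hγopt⟩ := hopt
  have hirr : ∀ k : Quotient s, ¬ Relation.TransGen (EdgeRel s γ) k k :=
    fun k => no_cycle s c p q hS γ ⟨⟨hγ0, hγp, hγq⟩, hγopt⟩ hmax k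
  obtain ⟨φ, hφK, hφlt⟩ := exists_rank s γ hirr
  set K := Fintype.card (Quotient s) with hK
  have : Nonempty (Quotient s) := ⟨Quotient.mk s (Classical.arbitrary Z)⟩
  have hK1 : 1 ≤ K := Fintype.card_pos
  refine ⟨γ, ⟨⟨hγ0, hγp, hγq⟩, hγopt⟩, ?_⟩
  -- total mass is 1
  have hsum1 : ∑ z, ∑ z', γ z z' = 1 := by
    rw [Finset.sum_congr rfl fun z _ => hγp z, hp.2]
  -- off-mass
  have hoff : 1 - relMass s γ = ∑ z, ∑ z', (if ¬ s.r z z' then γ z z' else 0) := by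
    rw [← hsum1, relMass]
    rw [← Finset.sum_sub_distrib]
    refine Finset.sum_congr rfl fun z _ => ?_
    rw [← Finset.sum_sub_distrib]
    refine Finset.sum_congr rfl fun z' _ => ?_
    by_cases h : s.r z z' <;> simp [h]
  -- the cut flows
  set F : ℕ → ℝ := fun t => ∑ z, ∑ z',
    (if φ (Quotient.mk s z) ≤ t ∧ ¬ φ (Quotient.mk s z') ≤ t then γ z z' else 0) with hF
  -- Step 2 : off-mass bounded by sum of cut flows
  have step2 : (∑ z, ∑ z', if ¬ s.r z z' then γ z z' else 0) ≤ ∑ t ∈ range (K - 1), F t := by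
    have hswap : ∑ t ∈ range (K - 1), F t = ∑ z, ∑ z',
        (((range (K - 1)).filter (fun t =>
          φ (Quotient.mk s z) ≤ t ∧ ¬ φ (Quotient.mk s z') ≤ t)).card : ℝ) * γ z z' := by
      rw [hF, Finset.sum_comm]
      refine Finset.sum_congr rfl fun z _ => ?_
      rw [Finset.sum_comm]
      refine Finset.sum_congr rfl fun z' _ => ?_
      rw [← Finset.sum_filter, Finset.sum_const, nsmul_eq_mul]
    rw [hswap]
    refine Finset.sum_le_sum fun z _ => Finset.sum_le_sum fun z' _ => ?_
    by_cases hr : s.r z z'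
    · simp only [hr, not_true, if_false]
      exact mul_nonneg (Nat.cast_nonneg _) (hγ0 z z')
    · simp only [hr, not_false_iff, if_true]
      rcases (hγ0 z z').eq_or_lt with h0 | h0
      · rw [← h0]; simp
      · have hlt := hφlt z z' h0 hr
        have hmem : φ (Quotient.mk s z) ∈ (range (K - 1)).filter (fun t =>
            φ (Quotient.mk s z) ≤ t ∧ ¬ φ (Quotient.mk s z') ≤ t) := by
          simp only [mem_filter, mem_range]
          have h1 := hφK (Quotient.mk s z')
          omega
        have hcard : 1 ≤ (((range (K - 1)).filter (fun t =>
            φ (Quotient.mk s z) ≤ t ∧ ¬ φ (Quotient.mk s z') ≤ t)).card : ℝ) := by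
          rw [Nat.one_le_cast]
          exact Finset.card_pos.mpr ⟨_, hmem⟩
        exact le_mul_of_one_le_left (le_of_lt h0) hcard
  -- Step 3+4+5 : each cut flow bounded by tv
  have step3 : ∀ t : ℕ, F t ≤ tv (projQ s q) (projQ s p) := by
    intro t
    have hback : ∀ z z' : Z,
        (if φ (Quotient.mk s z') ≤ t ∧ ¬ φ (Quotient.mk s z) ≤ t then γ z z' else 0) = 0 := by
      intro z z'
      split_ifs with h
      · obtain ⟨h1, h2⟩ := h
        by_contra hne
        have h0 : 0 < γ z z' := lt_of_le_of_ne (hγ0 z z') (Ne.symm hne)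
        by_cases hr : s.r z z'
        · have := Quotient.sound hr
          rw [this] at h2
          exact h2 h1
        · have := hφlt z z' h0 hr
          omega
      · rfl
    have hF3 : F t = ∑ z, (if φ (Quotient.mk s z) ≤ t then (p z - q z) else 0) := by
      have hterm : ∀ z z' : Z,
          (if φ (Quotient.mk s z) ≤ t ∧ ¬ φ (Quotient.mk s z') ≤ t then γ z z' else 0)
          = (if φ (Quotient.mk s z) ≤ t then γ z z' else 0)
            - (if φ (Quotient.mk s z') ≤ t then γ z z' else 0)
            + (if φ (Quotient.mk s z') ≤ t ∧ ¬ φ (Quotient.mk s z) ≤ t then γ z z' else 0) := by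
        intro z z'
        by_cases h1 : φ (Quotient.mk s z) ≤ t <;> by_cases h2 : φ (Quotient.mk s z') ≤ t <;>
          simp [h1, h2]
      calc F t = ∑ z, ∑ z',
          ((if φ (Quotient.mk s z) ≤ t then γ z z' else 0)
            - (if φ (Quotient.mk s z') ≤ t then γ z z' else 0)
            + (if φ (Quotient.mk s z') ≤ t ∧ ¬ φ (Quotient.mk s z) ≤ t then γ z z' else 0)) := by
            rw [hF]
            exact Finset.sum_congr rfl fun z _ => Finset.sum_congr rfl fun z' _ => hterm z z'
        _ = (∑ z, ∑ z', (if φ (Quotient.mk s z) ≤ t then γ z z' else 0))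
            - (∑ z, ∑ z', (if φ (Quotient.mk s z') ≤ t then γ z z' else 0))
            + ∑ z, ∑ z',
              (if φ (Quotient.mk s z') ≤ t ∧ ¬ φ (Quotient.mk s z) ≤ t then γ z z' else 0) := by
            simp only [Finset.sum_add_distrib, Finset.sum_sub_distrib]
        _ = (∑ z, (if φ (Quotient.mk s z) ≤ t then p z else 0))
            - ∑ z, (if φ (Quotient.mk s z) ≤ t then q z else 0) := by
            rw [Finset.sum_congr rfl fun z _ => Finset.sum_congr rfl fun z' _ => hback z z']
            simp only [Finset.sum_const_zero, add_zero]
            congr 1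
            · refine Finset.sum_congr rfl fun z _ => ?_
              split_ifs with h
              · exact hγp z
              · exact Finset.sum_const_zero
            · rw [Finset.sum_comm]
              refine Finset.sum_congr rfl fun z' _ => ?_
              split_ifs with h
              · exact hγq z'
              · exact Finset.sum_const_zero
        _ = ∑ z, (if φ (Quotient.mk s z) ≤ t then (p z - q z) else 0) := by
            rw [← Finset.sum_sub_distrib]
            refine Finset.sum_congr rfl fun z _ => ?_
            split_ifs with h <;> simp
    -- fiberwise regrouping
    have hfib : ∀ r : Z → ℝ, ∑ z, (if φ (Quotient.mk s z) ≤ t then r z else 0)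
        = ∑ cls : Quotient s, (if φ cls ≤ t then projQ s r cls else 0) := by
      intro r
      rw [← Finset.sum_fiberwise univ (fun z => Quotient.mk s z)
        (fun z => if φ (Quotient.mk s z) ≤ t then r z else 0)]
      refine Finset.sum_congr rfl fun cls _ => ?_
      have h1 : ∀ z ∈ univ.filter (fun z => Quotient.mk s z = cls),
          (if φ (Quotient.mk s z) ≤ t then r z else 0) = (if φ cls ≤ t then r z else 0) := by
        intro z hz
        rw [(mem_filter.mp hz).2]
      rw [Finset.sum_congr rfl h1]
      split_ifs with h
      · rfl
      · exact Finset.sum_const_zero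
    have hfib2 : F t = ∑ cls : Quotient s,
        (if φ cls ≤ t then (projQ s p cls - projQ s q cls) else 0) := by
      rw [hF3]
      have : ∀ z, (if φ (Quotient.mk s z) ≤ t then (p z - q z) else 0)
          = (if φ (Quotient.mk s z) ≤ t then p z else 0)
            - (if φ (Quotient.mk s z) ≤ t then q z else 0) := by
        intro z; split_ifs <;> simp
      rw [Finset.sum_congr rfl fun z _ => this z, Finset.sum_sub_distrib, hfib p, hfib q,
        ← Finset.sum_sub_distrib]
      refine Finset.sum_congr rfl fun cls _ => ?_
      split_ifs <;> simp
    rw [hfib2]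
    have hP1 : ∑ cls : Quotient s, projQ s p cls = 1 := by
      simp only [projQ]
      rw [Finset.sum_fiberwise univ (fun z => Quotient.mk s z) p, hp.2]
    have hQ1 : ∑ cls : Quotient s, projQ s q cls = 1 := by
      simp only [projQ]
      rw [Finset.sum_fiberwise univ (fun z => Quotient.mk s z) q, hq.2]
    have h0 : ∑ cls : Quotient s, (projQ s p cls - projQ s q cls) = 0 := by
      rw [Finset.sum_sub_distrib, hP1, hQ1]; ring
    calc ∑ cls : Quotient s, (if φ cls ≤ t then (projQ s p cls - projQ s q cls) else 0)
        ≤ (∑ cls : Quotient s, |projQ s p cls - projQ s q cls|) / 2 :=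
          indicator_sum_le _ h0 _
      _ = tv (projQ s q) (projQ s p) := by
          rw [tv]
          congr 1
          exact Finset.sum_congr rfl fun cls _ => abs_sub_comm _ _
  calc 1 - ∑ z, ∑ z', (if s.r z z' then γ z z' else 0) = 1 - relMass s γ := rfl
    _ = ∑ z, ∑ z', (if ¬ s.r z z' then γ z z' else 0) := hoff
    _ ≤ ∑ t ∈ range (K - 1), F t := step2
    _ ≤ ∑ t ∈ range (K - 1), tv (projQ s q) (projQ s p) :=
        Finset.sum_le_sum fun t _ => step3 t
    _ = ((K - 1 : ℕ) : ℝ) * tv (projQ s q) (projQ s p) := by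
        rw [Finset.sum_const, card_range, nsmul_eq_mul]
    _ = ((K : ℝ) - 1) * tv (projQ s q) (projQ s p) := by
        rw [Nat.cast_sub hK1, Nat.cast_one]
end

section
/- Let Z be a finite nonempty set, c : Z × Z → ℝ a cost function, and p, q ∈ Δ(Z). Let S ⊆ Z × Z contain the diagonal {(z,z) : z ∈ Z}. If S is strictly c-cyclically monotone, then EVERY c-optimal coupling γ of p and q satisfies 1 − Σ_{(z,z')∈S} γ(z,z') ≤ (|Z| − 1)·‖q − p‖. -/
open Finset

/-- The set `S ⊆ Z × Z` is strictly `c`-cyclically monotone: it is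
`c`-cyclically monotone, and the cyclic inequality is strict whenever
`(z_j, z'_{j+1}) ∉ S` for some `j`. -/
def StrictCyclMono {Z : Type*} (c : Z → Z → ℝ) (S : Set (Z × Z)) : Prop :=
  CyclMono c S ∧
    ∀ J : ℕ, ∀ z z' : Fin (J + 2) → Z, (∀ j, (z j, z' j) ∈ S) →
      (∃ j, (z j, z' (j + 1)) ∉ S) →
      ∑ j, c (z j) (z' j) < ∑ j, c (z j) (z' (j + 1))

/- ### Auxiliary lemmas -/

lemma sum_ite_pair' {Z : Type*} [Fintype Z] [DecidableEq Z] (A B : Z) (g : Z → Z → ℝ) :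
    ∑ x, ∑ y, (if x = A ∧ y = B then g x y else 0) = g A B := by
  simp [ite_and]

lemma sum_ite_row' {Z : Type*} [Fintype Z] [DecidableEq Z] (x A B : Z) (r : ℝ) :
    ∑ y, (if x = A ∧ y = B then r else 0) = if x = A then r else 0 := by
  simp [ite_and]

lemma sum_ite_col' {Z : Type*} [Fintype Z] [DecidableEq Z] (y A B : Z) (r : ℝ) :
    ∑ x, (if x = A ∧ y = B then r else 0) = if y = B then r else 0 := by
  simp [ite_and]

/-- If `γ` is an optimal coupling, then along any cycle in the support of `γ`,
rerouting all mass to the diagonal cannot strictly decrease the cost. -/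
lemma opt_cycle_ineq' {Z : Type*} [Fintype Z] (c : Z → Z → ℝ) (p q : Z → ℝ)
    (γ : Z → Z → ℝ) (hγ : IsOptimalCoupling c γ p q) {J : ℕ}
    (zf : Fin (J + 2) → Z) (hpos : ∀ j, 0 < γ (zf j) (zf (j + 1))) :
    ∑ j, c (zf j) (zf (j + 1)) ≤ ∑ j, c (zf j) (zf j) := by
  classical
  set m : ℝ := Finset.univ.inf' (univ_nonempty) (fun j : Fin (J + 2) => γ (zf j) (zf (j + 1))) with hm
  have hm0 : 0 < m := by
    rw [hm, Finset.lt_inf'_iff]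
    exact fun j _ => hpos j
  set k : ℝ := ((J + 2 : ℕ) : ℝ)
  have hk0 : (0:ℝ) < k := by positivity
  set ε : ℝ := m / k with hε
  have hε0 : 0 < ε := div_pos hm0 hk0
  have hεk : ε * k = m := div_mul_cancel₀ m (ne_of_gt hk0)
  set D : Fin (J+2) → Z → Z → ℝ := fun j x y =>
    (if x = zf j ∧ y = zf j then (1:ℝ) else 0) - (if x = zf j ∧ y = zf (j + 1) then 1 else 0)
    with hD
  set γ' : Z → Z → ℝ := fun x y => γ x y + ε * ∑ j, D j x y with hγ'
  have hcoup : IsCoupling γ' p q := by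
    obtain ⟨⟨hnn, hrow, hcol⟩, -⟩ := hγ
    refine ⟨?_, ?_, ?_⟩
    · intro x y
      by_cases hxy : ∃ j, x = zf j ∧ y = zf (j + 1)
      · obtain ⟨j0, hj0⟩ := hxy
        have h1 : m ≤ γ x y := by
          rw [hj0.1, hj0.2]
          exact Finset.inf'_le _ (Finset.mem_univ j0)
        have h2 : -k ≤ ∑ j, D j x y := by
          have : ∀ j : Fin (J+2), (-1:ℝ) ≤ D j x y := by
            intro j
            simp only [hD]
            have h1 : (if x = zf j ∧ y = zf (j+1) then (1:ℝ) else 0) ≤ 1 := by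
              split_ifs <;> norm_num
            have h0 : (0:ℝ) ≤ (if x = zf j ∧ y = zf j then (1:ℝ) else 0) := by
              split_ifs <;> norm_num
            linarith
          have hsum : ∑ _j : Fin (J+2), (-1:ℝ) = -k := by
            simp [k]
          calc (-k : ℝ) = ∑ _j : Fin (J+2), (-1:ℝ) := hsum.symm
            _ ≤ _ := Finset.sum_le_sum fun j _ => this j
        have : ε * (-k) ≤ ε * ∑ j, D j x y := by
          exact mul_le_mul_of_nonneg_left h2 (le_of_lt hε0)
        have : γ x y + ε * ∑ j, D j x y ≥ m + ε * (-k) := by linarith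
        simp only [hγ']
        have : m + ε * (-k) = 0 := by rw [mul_neg, hεk]; ring
        linarith
      · push_neg at hxy
        have : 0 ≤ ∑ j, D j x y := by
          apply Finset.sum_nonneg
          intro j _
          have h2 : (if x = zf j ∧ y = zf (j+1) then (1:ℝ) else 0) = 0 := by
            rw [if_neg]; intro h; exact hxy j h.1 h.2
          simp only [hD]
          rw [h2]
          split_ifs <;> norm_num
        have := hnn x y
        simp only [hγ']
        nlinarith
    · intro x
      simp only [hγ']
      rw [Finset.sum_add_distrib, hrow x, ← Finset.mul_sum, Finset.sum_comm]
      have : ∑ j : Fin (J+2), ∑ y, D j x y = 0 := by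
        apply Finset.sum_eq_zero
        intro j _
        simp only [hD, Finset.sum_sub_distrib, sum_ite_row']
        ring
      rw [this]; ring
    · intro y
      simp only [hγ']
      rw [Finset.sum_add_distrib, hcol y, ← Finset.mul_sum, Finset.sum_comm]
      have : ∑ j : Fin (J+2), ∑ x, D j x y = 0 := by
        have key : ∀ A : Z, ∑ j : Fin (J+2), (if y = zf (j+1) then (1:ℝ) else 0)
            = ∑ j : Fin (J+2), (if y = zf j then (1:ℝ) else 0) := by
          intro A
          exact Fintype.sum_equiv (Equiv.addRight (1 : Fin (J+2))) _ _ (fun j => rfl)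
        simp only [hD, Finset.sum_sub_distrib, sum_ite_col']
        rw [key y]; ring
      rw [this]; ring
  have hcost : transportCost c γ' =
      transportCost c γ + ε * (∑ j, c (zf j) (zf j) - ∑ j, c (zf j) (zf (j + 1))) := by
    simp only [transportCost, hγ']
    have expand : ∀ x y, c x y * (γ x y + ε * ∑ j, D j x y)
        = c x y * γ x y + ε * ∑ j, ((if x = zf j ∧ y = zf j then c x y else 0)
            - (if x = zf j ∧ y = zf (j+1) then c x y else 0)) := by
      intro x y
      rw [mul_add]
      congr 1
      rw [show c x y * (ε * ∑ j, D j x y) = ε * (c x y * ∑ j, D j x y) from by ring,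
        Finset.mul_sum]
      congr 1
      apply Finset.sum_congr rfl
      intro j _
      simp only [hD, mul_sub, mul_ite, mul_one, mul_zero]
    simp only [expand, Finset.sum_add_distrib, ← Finset.mul_sum]
    congr 1
    congr 1
    have swap1 : ∀ x : Z, ∑ y, ∑ j : Fin (J+2), ((if x = zf j ∧ y = zf j then c x y else 0)
        - (if x = zf j ∧ y = zf (j+1) then c x y else 0))
        = ∑ j : Fin (J+2), ∑ y, ((if x = zf j ∧ y = zf j then c x y else 0)
        - (if x = zf j ∧ y = zf (j+1) then c x y else 0)) := fun x => Finset.sum_comm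
    simp only [swap1]
    rw [Finset.sum_comm]
    rw [← Finset.sum_sub_distrib]
    apply Finset.sum_congr rfl
    intro j _
    simp only [Finset.sum_sub_distrib, sum_ite_pair']
  obtain ⟨-, hopt⟩ := hγ
  have h1 := hopt γ' hcoup
  rw [hcost] at h1
  have h2 : 0 ≤ ε * (∑ j, c (zf j) (zf j) - ∑ j, c (zf j) (zf (j + 1))) := by linarith
  nlinarith

/-- From an edge `a → b` and a path `b ⇝ a` we can build a cyclic sequence. -/
lemma cycle_of_path' {Z : Type*} (E : Z → Z → Prop) {a b : Z} (hne : a ≠ b)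
    (hab : E a b) (hba : Relation.ReflTransGen E b a) :
    ∃ (J : ℕ) (zf : Fin (J + 2) → Z), zf 0 = a ∧ zf 1 = b ∧
      ∀ j, E (zf j) (zf (j + 1)) := by
  obtain ⟨l, hchain, hlast⟩ := List.exists_isChain_cons_of_relationReflTransGen hba
  have hlne : l ≠ [] := by
    intro h; subst h; simp at hlast; exact hne hlast.symm
  set L : List Z := a :: b :: l with hL
  have hLchain : List.IsChain E (a :: b :: l) := List.isChain_cons_cons.mpr ⟨hab, hchain⟩
  have hLlen : L.length = l.length + 2 := by simp [hL]
  obtain ⟨n, hn⟩ : ∃ n, l.length = n + 1 := by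
    cases l with
    | nil => exact absurd rfl hlne
    | cons x xs => exact ⟨xs.length, by simp⟩
  have hstep : ∀ i : ℕ, i + 1 < L.length → E (L.getD i a) (L.getD (i + 1) a) := by
    intro i h
    have h1 : i < L.length := by omega
    rw [List.getD_eq_getElem L a h1, List.getD_eq_getElem L a h]
    exact hLchain.getElem i h
  have hlastL : L.getD (n + 2) a = a := by
    have h1 : L.getLast (by simp [hL]) = a := by
      show (a :: b :: l).getLast (by simp) = a
      rw [List.getLast_cons (by simp)]
      exact hlast
    rw [List.getD_eq_get L a ⟨n + 2, by omega⟩]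
    have h2 : L.get ⟨n + 2, by omega⟩ = L.get ⟨L.length - 1, by omega⟩ := by
      congr 1
      exact Fin.ext (by simp; omega)
    rw [List.getLast_eq_getElem] at h1
    exact h2.trans h1
  refine ⟨n, fun j => L.getD j.val a, ?_, ?_, ?_⟩
  · simp [hL]
  · have h1 : ((1 : Fin (n + 2)) : ℕ) = 1 := by
      simp [Fin.val_one]
    simp [h1, hL]
  · intro j
    have hjv : (j : ℕ) < n + 2 := j.isLt
    have haddval : ((j + 1 : Fin (n + 2)) : ℕ) = ((j : ℕ) + 1) % (n + 2) := by
      simp [Fin.add_def]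
    rcases Nat.lt_or_ge ((j : ℕ) + 1) (n + 2) with hj | hj
    · have hadd : ((j + 1 : Fin (n + 2)) : ℕ) = (j : ℕ) + 1 := by
        rw [haddval, Nat.mod_eq_of_lt hj]
      simp only [hadd]
      exact hstep _ (by omega)
    · have hjn : (j : ℕ) = n + 1 := by omega
      have hadd : ((j + 1 : Fin (n + 2)) : ℕ) = 0 := by
        rw [haddval, hjn]
        simp
      simp only [hadd, hjn]
      have := hstep (n + 1) (by omega)
      rw [hlastL] at this
      simpa [hL] using this

/-- Key structural fact: the support of an optimal coupling contains no cycle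
using an edge outside `S`. -/
lemma no_bad_cycle' {Z : Type*} [Fintype Z] (c : Z → Z → ℝ) (p q : Z → ℝ)
    (S : Set (Z × Z)) (hdiag : ∀ z : Z, (z, z) ∈ S) (hS : StrictCyclMono c S)
    (γ : Z → Z → ℝ) (hγ : IsOptimalCoupling c γ p q) {a b : Z}
    (hab : 0 < γ a b) (hnS : (a, b) ∉ S)
    (hba : Relation.ReflTransGen (fun x y => 0 < γ x y) b a) : False := by
  have hne : a ≠ b := by
    intro h; subst h; exact hnS (hdiag a)
  obtain ⟨J, zf, h0, h1, hedge⟩ := cycle_of_path' (fun x y => 0 < γ x y) hne hab hba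
  have hin : ∀ j, (zf j, zf j) ∈ S := fun j => hdiag _
  have hex : ∃ j : Fin (J + 2), (zf j, zf (j + 1)) ∉ S := by
    refine ⟨0, ?_⟩
    rw [show (0 : Fin (J + 2)) + 1 = 1 from by norm_num, h0, h1]
    exact hnS
  have hstrict := hS.2 J zf zf hin hex
  have hopp := opt_cycle_ineq' c p q γ hγ zf hedge
  linarith

/-- Bound on mass moved under strict cyclical monotonicity.
If `S` contains the diagonal and is strictly `c`-cyclically monotone, then
EVERY `c`-optimal coupling `γ` of `p` and `q` places mass at most
`(|Z| − 1)·‖q − p‖` outside `S`. -/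
theorem strict_mass_moved_bound {Z : Type*} [Fintype Z] [Nonempty Z]
    (c : Z → Z → ℝ) (p q : Z → ℝ) (hp : IsProbVec p) (hq : IsProbVec q)
    (S : Set (Z × Z)) [DecidablePred (· ∈ S)]
    (hdiag : ∀ z : Z, (z, z) ∈ S)
    (hS : StrictCyclMono c S)
    (γ : Z → Z → ℝ) (hγ : IsOptimalCoupling c γ p q) :
    1 - ∑ z, ∑ z', (if (z, z') ∈ S then γ z z' else 0) ≤
      ((Fintype.card Z : ℝ) - 1) * tv q p := by
  classical
  obtain ⟨⟨hnn, hrow, hcol⟩, -⟩ := id hγ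
  set E : Z → Z → Prop := fun x y => 0 < γ x y with hE
  set R : Z → Z → Prop := Relation.ReflTransGen E with hR
  have hRrefl : ∀ z, R z z := fun z => Relation.ReflTransGen.refl
  have hRtrans : ∀ {x y z}, R x y → R y z → R x z := fun h1 h2 => h1.trans h2
  have hkey : ∀ x y, 0 < γ x y → (x, y) ∉ S → ¬ R y x :=
    fun x y h1 h2 h3 => no_bad_cycle' c p q S hdiag hS γ hγ h1 h2 h3
  set f : Z → ℕ := fun z => (univ.filter (fun x => R x z ∧ ¬ R z x)).card with hf
  -- monotonicity of f along R
  have hsub : ∀ x y, R x y →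
      (univ.filter (fun w => R w x ∧ ¬ R x w)) ⊆ (univ.filter (fun w => R w y ∧ ¬ R y w)) := by
    intro x y hxy
    intro w hw
    simp only [Finset.mem_filter, Finset.mem_univ, true_and] at hw ⊢
    refine ⟨hRtrans hw.1 hxy, fun hyw => hw.2 (hRtrans hxy hyw)⟩
  have hf1 : ∀ x y, R x y → f x ≤ f y := fun x y hxy => Finset.card_le_card (hsub x y hxy)
  have hf2 : ∀ x y, R x y → ¬ R y x → f x + 1 ≤ f y := by
    intro x y hxy hnyx
    have hxin : x ∈ univ.filter (fun w => R w y ∧ ¬ R y w) := by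
      simp only [Finset.mem_filter, Finset.mem_univ, true_and]
      exact ⟨hxy, hnyx⟩
    have hxout : x ∉ univ.filter (fun w => R w x ∧ ¬ R x w) := by
      simp only [Finset.mem_filter, Finset.mem_univ, true_and]
      intro h
      exact h.2 (hRrefl x)
    have : (univ.filter (fun w => R w x ∧ ¬ R x w)) ⊂ (univ.filter (fun w => R w y ∧ ¬ R y w)) :=
      (Finset.ssubset_iff_of_subset (hsub x y hxy)).mpr ⟨x, hxin, hxout⟩
    exact Finset.card_lt_card this
  have hcard1 : 1 ≤ Fintype.card Z := Fintype.card_pos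
  have hf3 : ∀ z, (f z : ℝ) ≤ (Fintype.card Z : ℝ) - 1 := by
    intro z
    have hzout : z ∉ univ.filter (fun w => R w z ∧ ¬ R z w) := by
      simp only [Finset.mem_filter, Finset.mem_univ, true_and]
      intro h
      exact h.2 (hRrefl z)
    have hsub2 : (univ.filter (fun w => R w z ∧ ¬ R z w)) ⊆ univ.erase z := by
      intro w hw
      rcases eq_or_ne w z with h | h
      · exact absurd (h ▸ hw) hzout
      · exact Finset.mem_erase.mpr ⟨h, Finset.mem_univ w⟩
    have := Finset.card_le_card hsub2
    rw [Finset.card_erase_of_mem (Finset.mem_univ z), Finset.card_univ] at this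
    have hcast : ((Fintype.card Z - 1 : ℕ) : ℝ) = (Fintype.card Z : ℝ) - 1 := by
      push_cast [Nat.cast_sub hcard1]
      ring
    calc (f z : ℝ) ≤ ((Fintype.card Z - 1 : ℕ) : ℝ) := by exact_mod_cast this
      _ = _ := hcast
  set F : Z → ℝ := fun z => (f z : ℝ) with hF
  have hFnn : ∀ z, 0 ≤ F z := fun z => Nat.cast_nonneg _
  -- Step A : rewrite LHS as mass outside S
  have htot : ∑ z, ∑ z', γ z z' = 1 := by
    calc ∑ z, ∑ z', γ z z' = ∑ z, p z := Finset.sum_congr rfl fun z _ => hrow z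
      _ = 1 := hp.2
  have hstepA : 1 - ∑ z, ∑ z', (if (z, z') ∈ S then γ z z' else 0)
      = ∑ z, ∑ z', (if (z, z') ∈ S then 0 else γ z z') := by
    rw [← htot, ← Finset.sum_sub_distrib]
    apply Finset.sum_congr rfl
    intro z _
    rw [← Finset.sum_sub_distrib]
    apply Finset.sum_congr rfl
    intro z' _
    split_ifs <;> ring
  -- Step B : pointwise bound by the potential difference
  have hstepB : ∑ z, ∑ z', (if (z, z') ∈ S then 0 else γ z z')
      ≤ ∑ z, ∑ z', (F z' - F z) * γ z z' := by
    apply Finset.sum_le_sum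
    intro z _
    apply Finset.sum_le_sum
    intro z' _
    rcases eq_or_lt_of_le (hnn z z') with h0 | h0
    · rw [← h0]
      split_ifs <;> simp
    · have hRzz' : R z z' := Relation.ReflTransGen.single h0
      by_cases hmem : (z, z') ∈ S
      · rw [if_pos hmem]
        have := hf1 z z' hRzz'
        have hFle : F z ≤ F z' := by simp only [hF]; exact_mod_cast this
        nlinarith
      · rw [if_neg hmem]
        have hnR : ¬ R z' z := hkey z z' h0 hmem
        have := hf2 z z' hRzz' hnR
        have hFle : F z + 1 ≤ F z' := by simp only [hF]; exact_mod_cast this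
        nlinarith
  -- Step C : the telescoping identity
  have hstepC : ∑ z, ∑ z', (F z' - F z) * γ z z' = ∑ z, F z * (q z - p z) := by
    have expand : ∀ z z', (F z' - F z) * γ z z' = F z' * γ z z' - F z * γ z z' :=
      fun z z' => by ring
    simp only [expand, Finset.sum_sub_distrib]
    have h1 : ∑ z, ∑ z', F z' * γ z z' = ∑ z, F z * q z := by
      rw [Finset.sum_comm]
      apply Finset.sum_congr rfl
      intro z' _
      rw [← Finset.mul_sum, hcol z']
    have h2 : ∑ z, ∑ z', F z * γ z z' = ∑ z, F z * p z := by
      apply Finset.sum_congr rfl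
      intro z _
      rw [← Finset.mul_sum, hrow z]
    rw [h1, h2, ← Finset.sum_sub_distrib]
    apply Finset.sum_congr rfl
    intro z _
    ring
  -- Step D : bound via total variation
  have hqp0 : ∑ z, (q z - p z) = 0 := by
    rw [Finset.sum_sub_distrib, hq.2, hp.2]
    ring
  have hmax : ∑ z, max (q z - p z) 0 = tv q p := by
    have : ∀ z, max (q z - p z) 0 = ((q z - p z) + |q z - p z|) / 2 := by
      intro z
      rcases le_or_gt 0 (q z - p z) with h | h
      · rw [max_eq_left h, abs_of_nonneg h]; ring
      · rw [max_eq_right (le_of_lt h), abs_of_neg h]; ring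
    simp only [this]
    rw [← Finset.sum_div, Finset.sum_add_distrib, hqp0, tv]
    ring
  have hn1 : (0:ℝ) ≤ (Fintype.card Z : ℝ) - 1 := by
    have : (1:ℝ) ≤ (Fintype.card Z : ℝ) := by exact_mod_cast hcard1
    linarith
  have hstepD : ∑ z, F z * (q z - p z) ≤ ((Fintype.card Z : ℝ) - 1) * tv q p := by
    calc ∑ z, F z * (q z - p z)
        ≤ ∑ z, ((Fintype.card Z : ℝ) - 1) * max (q z - p z) 0 := by
          apply Finset.sum_le_sum
          intro z _
          rcases le_or_gt 0 (q z - p z) with h | h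
          · rw [max_eq_left h]
            exact mul_le_mul_of_nonneg_right (hf3 z) h
          · rw [max_eq_right (le_of_lt h)]
            have : F z * (q z - p z) ≤ 0 := mul_nonpos_of_nonneg_of_nonpos (hFnn z) (le_of_lt h)
            linarith
      _ = ((Fintype.card Z : ℝ) - 1) * tv q p := by
          rw [← Finset.mul_sum, hmax]
  calc 1 - ∑ z, ∑ z', (if (z, z') ∈ S then γ z z' else 0)
      = ∑ z, ∑ z', (if (z, z') ∈ S then 0 else γ z z') := hstepA
    _ ≤ ∑ z, ∑ z', (F z' - F z) * γ z z' := hstepB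
    _ = ∑ z, F z * (q z - p z) := hstepC
    _ ≤ ((Fintype.card Z : ℝ) - 1) * tv q p := hstepD
end

section
/- Let Z be a finite nonempty set, c : Z × Z → ℝ a cost function whose diagonal D = {(z,z) : z ∈ Z} is c-cyclically monotone, and p ∈ Δ(Z). Then the diagonal coupling γ_D defined by γ_D(z,z') = p(z) if z = z' and 0 otherwise is a c-optimal coupling of p with itself; that is, Σ_z p(z)·c(z,z) ≤ Σ_{z,z'} c(z,z')·γ(z,z') for every coupling γ of p and p. -/
open Finset

section Circ
variable {Z : Type*} [Fintype Z] [DecidableEq Z]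

private lemma outflow_pos (ν : Z → Z → ℝ) (hpos : ∀ x y, 0 ≤ ν x y)
    (hcirc : ∀ z, ∑ w, ν z w = ∑ w, ν w z)
    {x y : Z} (hxy : x ≠ y) (h : 0 < ν x y) :
    ∃ w, y ≠ w ∧ 0 < ν y w := by
  by_contra hcon
  push_neg at hcon
  have h1 : ∑ w, ν y w = ν y y := by
    apply Finset.sum_eq_single_of_mem y (mem_univ y)
    intro w _ hw
    exact le_antisymm (hcon w (Ne.symm hw)) (hpos y w)
  have h2 : ν x y + ν y y ≤ ∑ w, ν w y := by
    have hsub : ({x, y} : Finset Z).sum (fun w => ν w y) ≤ ∑ w, ν w y :=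
      Finset.sum_le_sum_of_subset_of_nonneg (subset_univ _) (fun i _ _ => hpos i y)
    rwa [Finset.sum_pair hxy] at hsub
  have h3 := hcirc y
  linarith

private lemma circ_nonneg (d : Z → Z → ℝ)
    (hcyc : ∀ (J : ℕ) (u : Fin (J + 2) → Z), 0 ≤ ∑ j, d (u j) (u (j + 1)))
    (hd0 : ∀ z, d z z = 0) :
    ∀ (N : ℕ) (ν : Z → Z → ℝ), (∀ x y, 0 ≤ ν x y) →
      (∀ z, ∑ w, ν z w = ∑ w, ν w z) →
      (Finset.univ.filter (fun e : Z × Z => e.1 ≠ e.2 ∧ 0 < ν e.1 e.2)).card ≤ N →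
      0 ≤ ∑ x, ∑ y, ν x y * d x y := by
  intro N
  induction N with
  | zero =>
    intro ν hpos hcirc hcard
    have hz : ∀ x y, ν x y * d x y = 0 := by
      intro x y
      by_cases hxy : x = y
      · subst hxy; rw [hd0, mul_zero]
      · have hnlt : ¬ (0 < ν x y) := by
          intro hlt
          have hmem : (x, y) ∈ Finset.univ.filter
              (fun e : Z × Z => e.1 ≠ e.2 ∧ 0 < ν e.1 e.2) := by
            simp [hxy, hlt]
          have := Finset.card_pos.mpr ⟨_, hmem⟩
          omega
        rw [le_antisymm (not_lt.mp hnlt) (hpos x y), zero_mul]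
    simp [hz]
  | succ N ih =>
    intro ν hpos hcirc hcard
    by_cases hS : (Finset.univ.filter (fun e : Z × Z => e.1 ≠ e.2 ∧ 0 < ν e.1 e.2)) = ∅
    · exact ih ν hpos hcirc (by rw [hS]; simp)
    · obtain ⟨e0, he0⟩ := Finset.nonempty_iff_ne_empty.mpr hS
      rw [Finset.mem_filter] at he0
      have he0' := he0.2
      -- the walk
      let T := {e : Z × Z // e.1 ≠ e.2 ∧ 0 < ν e.1 e.2}
      have step : ∀ e : T, ∃ w, e.1.2 ≠ w ∧ 0 < ν e.1.2 w :=
        fun e => outflow_pos ν hpos hcirc e.2.1 e.2.2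
      let nxt : T → T := fun e => ⟨(e.1.2, Classical.choose (step e)),
        (Classical.choose_spec (step e)).1, (Classical.choose_spec (step e)).2⟩
      let f : ℕ → T := fun n => nxt^[n] ⟨e0, he0'⟩
      let v : ℕ → Z := fun n => (f n).1.1
      have hlink : ∀ n, v (n + 1) = (f n).1.2 := by
        intro n
        show (nxt^[n + 1] _).1.1 = _
        rw [Function.iterate_succ_apply']
      have hedge : ∀ n, v n ≠ v (n + 1) ∧ 0 < ν (v n) (v (n + 1)) := by
        intro n; rw [hlink n]; exact (f n).2
      -- pigeonhole: a repeated vertex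
      have hP : ∃ m, ∃ i, i < m ∧ v i = v m := by
        have hc : Fintype.card Z < Fintype.card (Fin (Fintype.card Z + 1)) := by simp
        obtain ⟨i, j, hij, hvij⟩ :=
          Fintype.exists_ne_map_eq_of_card_lt (fun k : Fin (Fintype.card Z + 1) => v k) hc
        rcases lt_or_gt_of_ne (fun h : (i : ℕ) = j => hij (Fin.ext h)) with h | h
        · exact ⟨j, i, h, hvij⟩
        · exact ⟨i, j, h, hvij.symm⟩
      classical
      obtain ⟨i, him, hvim⟩ := Nat.find_spec hP
      set m := Nat.find hP with hmdef
      have hinj : ∀ a b, a < b → b < m → v a ≠ v b := by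
        intro a b hab hbm heq
        exact Nat.find_min hP hbm ⟨a, hab, heq⟩
      have hL2 : i + 2 ≤ m := by
        rcases Nat.lt_or_ge (i + 1) m with h | h
        · omega
        · exfalso
          have : m = i + 1 := by omega
          exact (hedge i).1 (by rw [← this]; exact hvim)
      obtain ⟨J, hJ⟩ : ∃ J, m = i + (J + 2) := ⟨m - i - 2, by omega⟩
      -- the cycle
      let u : Fin (J + 2) → Z := fun k => v (i + (k : ℕ))
      have huinj : Function.Injective u := by
        intro a b hab
        by_contra hne
        rcases lt_or_gt_of_ne (fun h : (a : ℕ) = b => hne (Fin.ext h)) with h | h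
        · exact hinj (i + a) (i + b) (by omega) (by omega) hab
        · exact hinj (i + b) (i + a) (by omega) (by omega) hab.symm
      have hu1 : ∀ k : Fin (J + 2), u (k + 1) = v (i + (k : ℕ) + 1) := by
        intro k
        have hval : ((k + 1 : Fin (J + 2)) : ℕ) = ((k : ℕ) + 1) % (J + 2) := by
          simp [Fin.add_def]
        by_cases hk : (k : ℕ) + 1 < J + 2
        · show v (i + ((k + 1 : Fin (J + 2)) : ℕ)) = _
          rw [hval, Nat.mod_eq_of_lt hk, ← Nat.add_assoc]
        · have hk2 : (k : ℕ) + 1 = J + 2 := by omega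
          show v (i + ((k + 1 : Fin (J + 2)) : ℕ)) = _
          rw [hval, hk2, Nat.mod_self]
          have : i + (k : ℕ) + 1 = m := by omega
          rw [this, Nat.add_zero]
          exact hvim
      have hedgeu : ∀ k : Fin (J + 2), u k ≠ u (k + 1) ∧ 0 < ν (u k) (u (k + 1)) := by
        intro k
        rw [hu1 k]
        exact hedge (i + (k : ℕ))
      -- epsilon
      let ε : ℝ := Finset.univ.inf' Finset.univ_nonempty
        (fun k : Fin (J + 2) => ν (u k) (u (k + 1)))
      have hεpos : 0 < ε := by
        rw [Finset.lt_inf'_iff]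
        exact fun k _ => (hedgeu k).2
      have hεle : ∀ k : Fin (J + 2), ε ≤ ν (u k) (u (k + 1)) :=
        fun k => Finset.inf'_le _ (mem_univ k)
      obtain ⟨k0, _, hk0⟩ := Finset.exists_mem_eq_inf' Finset.univ_nonempty
        (fun k : Fin (J + 2) => ν (u k) (u (k + 1)))
      -- the cycle measure μ
      let μ : Z → Z → ℝ := fun x y =>
        ∑ k : Fin (J + 2), if x = u k ∧ y = u (k + 1) then ε else 0
      have hμnonneg : ∀ x y, 0 ≤ μ x y := by
        intro x y
        apply Finset.sum_nonneg
        intro k _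
        split <;> [exact le_of_lt hεpos; exact le_refl 0]
      have hμedge : ∀ k : Fin (J + 2), μ (u k) (u (k + 1)) = ε := by
        intro k
        have := Finset.sum_eq_single_of_mem k (mem_univ k)
          (f := fun l : Fin (J + 2) => if u k = u l ∧ u (k + 1) = u (l + 1) then ε else 0)
          (by
            intro l _ hlk
            show (if u k = u l ∧ u (k + 1) = u (l + 1) then ε else 0) = 0
            rw [if_neg]
            rintro ⟨h1, _⟩
            exact hlk (huinj h1.symm))
        simpa using this
      have hμle : ∀ x y, μ x y ≤ ν x y := by
        intro x y
        by_cases hxy : ∃ k : Fin (J + 2), x = u k ∧ y = u (k + 1)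
        · obtain ⟨k, hx, hy⟩ := hxy
          subst hx; subst hy
          rw [hμedge k]
          exact hεle k
        · have : μ x y = 0 := by
            apply Finset.sum_eq_zero
            intro k _
            rw [if_neg]
            exact fun h => hxy ⟨k, h⟩
          rw [this]; exact hpos x y
      have hμrow : ∀ x, ∑ y, μ x y = ∑ k : Fin (J + 2), if x = u k then ε else 0 := by
        intro x
        rw [Finset.sum_comm]
        apply Finset.sum_congr rfl
        intro k _
        by_cases hx : x = u k <;> simp [hx, Finset.sum_ite_eq']
      have hμcol : ∀ y, ∑ x, μ x y = ∑ k : Fin (J + 2), if y = u k then ε else 0 := by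
        intro y
        have h1 : ∑ x, μ x y = ∑ k : Fin (J + 2), if y = u (k + 1) then ε else 0 := by
          rw [Finset.sum_comm]
          apply Finset.sum_congr rfl
          intro k _
          by_cases hy : y = u (k + 1) <;> simp [hy, Finset.sum_ite_eq']
        rw [h1]
        exact Fintype.sum_equiv (Equiv.addRight (1 : Fin (J + 2)))
          (fun k => if y = u (k + 1) then ε else 0)
          (fun k => if y = u k then ε else 0) (fun k => rfl)
      -- the general cost identity for μ
      have hμsum : ∀ F : Z → Z → ℝ,
          ∑ x, ∑ y, μ x y * F x y = ∑ k : Fin (J + 2), ε * F (u k) (u (k + 1)) := by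
        intro F
        have h1 : ∀ x, ∑ y, μ x y * F x y
            = ∑ k : Fin (J + 2), ∑ y, if x = u k ∧ y = u (k + 1) then ε * F x y else 0 := by
          intro x
          rw [Finset.sum_comm]
          apply Finset.sum_congr rfl
          intro y _
          show (∑ k : Fin (J + 2), if x = u k ∧ y = u (k + 1) then ε else 0) * F x y = _
          rw [Finset.sum_mul]
          apply Finset.sum_congr rfl
          intro k _
          rw [ite_mul, zero_mul]
        simp_rw [h1]
        rw [Finset.sum_comm]
        apply Finset.sum_congr rfl
        intro k _
        simp [ite_and, Finset.sum_ite_eq', Finset.sum_ite_eq]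
      -- the new circulation
      let ν' : Z → Z → ℝ := fun x y => ν x y - μ x y
      have hν'pos : ∀ x y, 0 ≤ ν' x y := fun x y => sub_nonneg.mpr (hμle x y)
      have hν'circ : ∀ z, ∑ w, ν' z w = ∑ w, ν' w z := by
        intro z
        show ∑ w, (ν z w - μ z w) = ∑ w, (ν w z - μ w z)
        rw [Finset.sum_sub_distrib, Finset.sum_sub_distrib, hcirc z, hμrow z, hμcol z]
      have hcard' : (Finset.univ.filter
          (fun e : Z × Z => e.1 ≠ e.2 ∧ 0 < ν' e.1 e.2)).card ≤ N := by
        have hsub : (Finset.univ.filter (fun e : Z × Z => e.1 ≠ e.2 ∧ 0 < ν' e.1 e.2))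
            ⊂ (Finset.univ.filter (fun e : Z × Z => e.1 ≠ e.2 ∧ 0 < ν e.1 e.2)) := by
          constructor
          · intro e he
            rw [Finset.mem_filter] at he ⊢
            refine ⟨he.1, he.2.1, ?_⟩
            have := hμnonneg e.1 e.2
            have := he.2.2
            show 0 < ν e.1 e.2
            have hlt : 0 < ν e.1 e.2 - μ e.1 e.2 := he.2.2
            linarith
          · intro hsup
            have hmem : (u k0, u (k0 + 1)) ∈ Finset.univ.filter
                (fun e : Z × Z => e.1 ≠ e.2 ∧ 0 < ν e.1 e.2) := by
              rw [Finset.mem_filter]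
              exact ⟨mem_univ _, (hedgeu k0).1, (hedgeu k0).2⟩
            have hmem' := hsup hmem
            rw [Finset.mem_filter] at hmem'
            have : ν' (u k0) (u (k0 + 1)) = 0 := by
              show ν (u k0) (u (k0 + 1)) - μ (u k0) (u (k0 + 1)) = 0
              rw [hμedge k0, ← hk0]
              ring
            rw [this] at hmem'
            exact lt_irrefl 0 hmem'.2.2
        have := Finset.card_lt_card hsub
        omega
      have hIH := ih ν' hν'pos hν'circ hcard'
      have hsplit : ∑ x, ∑ y, ν x y * d x y
          = (∑ x, ∑ y, ν' x y * d x y) + ∑ x, ∑ y, μ x y * d x y := by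
        rw [← Finset.sum_add_distrib]
        apply Finset.sum_congr rfl
        intro x _
        rw [← Finset.sum_add_distrib]
        apply Finset.sum_congr rfl
        intro y _
        show ν x y * d x y = (ν x y - μ x y) * d x y + μ x y * d x y
        ring
      have hμcost : 0 ≤ ∑ x, ∑ y, μ x y * d x y := by
        rw [hμsum d, ← Finset.mul_sum]
        exact mul_nonneg (le_of_lt hεpos) (hcyc J u)
      linarith

end Circ

/-- If the diagonal is `c`-cyclically monotone, then the
diagonal coupling of `p` with itself is a `c`-optimal coupling; in particular
`Σ_z p(z)·c(z,z) ≤ Σ_{z,z'} c(z,z')·γ(z,z')` for every coupling `γ` of `p`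
and `p`. -/
theorem diagonal_coupling_optimal {Z : Type*} [Fintype Z] [Nonempty Z]
    [DecidableEq Z]
    (c : Z → Z → ℝ) (hdiag : CyclMono c {zz : Z × Z | zz.1 = zz.2})
    (p : Z → ℝ) (hp : IsProbVec p) :
    IsOptimalCoupling c (fun z z' => if z = z' then p z else 0) p p ∧
      ∀ γ : Z → Z → ℝ, IsCoupling γ p p →
        ∑ z, p z * c z z ≤ ∑ z, ∑ z', c z z' * γ z z' := by
  obtain ⟨hppos, hpsum⟩ := hp
  set d : Z → Z → ℝ := fun z z' => c z z' - c z z with hd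
  have hd0 : ∀ z, d z z = 0 := fun z => sub_self _
  have hcyc : ∀ (J : ℕ) (u : Fin (J + 2) → Z), 0 ≤ ∑ j, d (u j) (u (j + 1)) := by
    intro J u
    have h1 := hdiag J u u (fun j => rfl)
    have hsum : ∑ j, d (u j) (u (j + 1))
        = (∑ j, c (u j) (u (j + 1))) - ∑ j, c (u j) (u j) := by
      rw [← Finset.sum_sub_distrib]
    rw [hsum]
    linarith
  have key : ∀ γ : Z → Z → ℝ, IsCoupling γ p p →
      ∑ z, p z * c z z ≤ ∑ z, ∑ z', c z z' * γ z z' := by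
    rintro γ ⟨hγpos, hγrow, hγcol⟩
    have hcirc : ∀ z, ∑ w, γ z w = ∑ w, γ w z := fun z => by rw [hγrow z, hγcol z]
    have h0 := circ_nonneg d hcyc hd0
      (Finset.univ.filter (fun e : Z × Z => e.1 ≠ e.2 ∧ 0 < γ e.1 e.2)).card
      γ hγpos hcirc (le_refl _)
    have e1 : ∑ x, ∑ y, γ x y * d x y
        = (∑ x, ∑ y, c x y * γ x y) - ∑ x, p x * c x x := by
      rw [← Finset.sum_sub_distrib]
      apply Finset.sum_congr rfl
      intro x _
      rw [← hγrow x, Finset.sum_mul, ← Finset.sum_sub_distrib]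
      apply Finset.sum_congr rfl
      intro y _
      show γ x y * (c x y - c x x) = c x y * γ x y - γ x y * c x x
      ring
    linarith
  have hdiagcoup : IsCoupling (fun z z' => if z = z' then p z else 0) p p := by
    refine ⟨?_, ?_, ?_⟩
    · intro x y
      dsimp only
      split
      · exact hppos x
      · exact le_refl 0
    · intro x
      simp [Finset.sum_ite_eq]
    · intro y
      simp [Finset.sum_ite_eq']
  have hdcost : transportCost c (fun z z' => if z = z' then p z else 0)
      = ∑ z, p z * c z z := by
    unfold transportCost
    apply Finset.sum_congr rfl
    intro x _
    rw [Finset.sum_eq_single_of_mem x (mem_univ x)]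
    · show c x x * (if x = x then p x else 0) = p x * c x x
      rw [if_pos rfl, mul_comm]
    · intro y _ hyx
      simp [Ne.symm hyx]
  refine ⟨⟨hdiagcoup, ?_⟩, key⟩
  intro γ' hγ'
  rw [hdcost]
  exact key γ' hγ'
end

section
/- Let Z be a finite nonempty set and ζ : Z × Z → ℝ a nonnegative function with equal marginals, i.e., Σ_{z'} ζ(z,z') = Σ_{z'} ζ(z',z) for every z ∈ Z. Then ζ can be written as a finite nonnegative combination of cycle measures: there exist finitely many directed cycles C_1,…,C_J in Z and coefficients λ_1,…,λ_J ≥ 0 such that ζ(z,z') = Σ_{j : (z,z') ∈ C_j} λ_j for all (z,z') ∈ Z × Z. -/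
open Finset

/-- `C ⊆ Z × Z` is a directed cycle: there are `m ≥ 1` distinct points
`z_1, …, z_m` with `C = {(z_1,z_2), …, (z_{m−1},z_m), (z_m,z_1)}`. -/
def IsCycle {Z : Type*} (C : Set (Z × Z)) : Prop :=
  ∃ m : ℕ, ∃ z : Fin (m + 1) → Z, Function.Injective z ∧
    C = Set.range fun j : Fin (m + 1) => (z j, z (j + 1))

lemma sum_indicator_out {Z : Type*} [Fintype Z] {m : ℕ} (z : Fin (m + 1) → Z)
    (hz : Function.Injective z) (lam : ℝ) (v : Z) :
    ∑ w, Set.indicator (Set.range fun j : Fin (m + 1) => (z j, z (j + 1)))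
        (fun _ => lam) (v, w)
      = Set.indicator (Set.range z) (fun _ => lam) v := by
  classical
  by_cases hv : v ∈ Set.range z
  · obtain ⟨j0, rfl⟩ := hv
    rw [Set.indicator_of_mem (Set.mem_range_self j0)]
    have key : ∀ w, Set.indicator (Set.range fun j : Fin (m + 1) => (z j, z (j + 1)))
        (fun _ => lam) (z j0, w) = if w = z (j0 + 1) then lam else 0 := by
      intro w
      by_cases h : w = z (j0 + 1)
      · subst h; rw [Set.indicator_of_mem (Set.mem_range_self j0)]; simp
      · rw [Set.indicator_of_notMem, if_neg h]
        rintro ⟨j, hj⟩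
        rw [Prod.ext_iff] at hj
        obtain ⟨h1, h2⟩ := hj
        have : j = j0 := hz h1
        subst this
        exact h h2.symm
    simp_rw [key]
    simp
  · rw [Set.indicator_of_notMem hv]
    refine Finset.sum_eq_zero fun w _ => ?_
    rw [Set.indicator_of_notMem]
    rintro ⟨j, hj⟩
    exact hv ⟨j, congrArg Prod.fst hj⟩

lemma sum_indicator_in {Z : Type*} [Fintype Z] {m : ℕ} (z : Fin (m + 1) → Z)
    (hz : Function.Injective z) (lam : ℝ) (v : Z) :
    ∑ w, Set.indicator (Set.range fun j : Fin (m + 1) => (z j, z (j + 1)))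
        (fun _ => lam) (w, v)
      = Set.indicator (Set.range z) (fun _ => lam) v := by
  classical
  by_cases hv : v ∈ Set.range z
  · obtain ⟨j0, rfl⟩ := hv
    rw [Set.indicator_of_mem (Set.mem_range_self j0)]
    have key : ∀ w, Set.indicator (Set.range fun j : Fin (m + 1) => (z j, z (j + 1)))
        (fun _ => lam) (w, z j0) = if w = z (j0 - 1) then lam else 0 := by
      intro w
      by_cases h : w = z (j0 - 1)
      · subst h
        rw [Set.indicator_of_mem (Set.mem_range.mpr ⟨j0 - 1, by rw [sub_add_cancel]⟩)]
        simp
      · rw [Set.indicator_of_notMem, if_neg h]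
        rintro ⟨j, hj⟩
        rw [Prod.ext_iff] at hj
        obtain ⟨h1, h2⟩ := hj
        have hj1 : j + 1 = j0 := hz h2
        have : j = j0 - 1 := by rw [← hj1, add_sub_cancel_right]
        subst this
        exact h h1.symm
    simp_rw [key]
    simp
  · rw [Set.indicator_of_notMem hv]
    refine Finset.sum_eq_zero fun w _ => ?_
    rw [Set.indicator_of_notMem]
    rintro ⟨j, hj⟩
    exact hv ⟨j + 1, congrArg Prod.snd hj⟩

/-- Cycle decomposition. Every nonnegative function on
`Z × Z` with equal marginals is a finite nonnegative combination of cycle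
measures. -/
theorem cycle_decomposition {Z : Type*} [Fintype Z] [Nonempty Z]
    (ζ : Z → Z → ℝ) (hpos : ∀ z z', 0 ≤ ζ z z')
    (hbal : ∀ z, ∑ z', ζ z z' = ∑ z', ζ z' z) :
    ∃ (J : ℕ) (C : Fin J → Set (Z × Z)) (lam : Fin J → ℝ),
      (∀ j, IsCycle (C j)) ∧ (∀ j, 0 ≤ lam j) ∧
      ∀ z z', ζ z z' = ∑ j, Set.indicator (C j) (fun _ => lam j) (z, z') := by
  classical
  suffices H : ∀ n (ζ : Z → Z → ℝ), (∀ z z', 0 ≤ ζ z z') →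
      (∀ z, ∑ z', ζ z z' = ∑ z', ζ z' z) →
      (Finset.univ.filter fun p : Z × Z => 0 < ζ p.1 p.2).card = n →
      ∃ (J : ℕ) (C : Fin J → Set (Z × Z)) (lam : Fin J → ℝ),
        (∀ j, IsCycle (C j)) ∧ (∀ j, 0 ≤ lam j) ∧
        ∀ z z', ζ z z' = ∑ j, Set.indicator (C j) (fun _ => lam j) (z, z') by
    exact H _ ζ hpos hbal rfl
  intro n
  induction n using Nat.strong_induction_on with
  | _ n IH =>
  intro ζ hpos hbal hcard
  by_cases hex : ∃ a b, 0 < ζ a b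
  case neg =>
    refine ⟨0, Fin.elim0, Fin.elim0, (fun j => j.elim0), (fun j => j.elim0), ?_⟩
    intro v w
    push_neg at hex
    have : ζ v w = 0 := le_antisymm (hex v w) (hpos v w)
    simp [this]
  case pos =>
  obtain ⟨a, b, hab⟩ := hex
  -- successor function following positive flow
  set g : Z → Z := fun v => if h : ∃ w, 0 < ζ v w then h.choose else Classical.arbitrary Z
    with hgdef
  have hg : ∀ v, (∃ w, 0 < ζ v w) → 0 < ζ v (g v) := by
    intro v h
    simp only [hgdef, dif_pos h]
    exact h.choose_spec
  have hout : ∀ u v, 0 < ζ u v → ∃ w, 0 < ζ v w := by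
    intro u v huv
    by_contra hc
    push_neg at hc
    have h1 : ∑ w, ζ v w ≤ 0 := Finset.sum_nonpos fun w _ => hc w
    have h2 : 0 < ∑ w, ζ w v :=
      lt_of_lt_of_le huv (Finset.single_le_sum (fun w _ => hpos w v) (Finset.mem_univ u))
    rw [hbal v] at h1
    linarith
  set f : ℕ → Z := fun k => g^[k] b with hfdef
  have hf : ∀ k, 0 < ζ (f k) (f (k + 1)) := by
    intro k
    induction k with
    | zero =>
      have := hg b (hout a b hab)
      simpa [hfdef] using this
    | succ k ihk =>
      have := hg (f (k + 1)) (hout _ _ ihk)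
      simpa [hfdef, Function.iterate_succ_apply'] using this
  -- find a repetition
  obtain ⟨p, q, hpq, hfpq⟩ := Finite.exists_ne_map_eq_of_infinite f
  have hP : ∃ k, ∃ i, i < k ∧ f i = f k := by
    rcases hpq.lt_or_gt with h | h
    · exact ⟨q, p, h, hfpq⟩
    · exact ⟨p, q, h, hfpq.symm⟩
  set jj := Nat.find hP with hjjdef
  obtain ⟨i, hij, hfij⟩ := Nat.find_spec hP
  have hjinj : ∀ p q, p < q → q < jj → f p ≠ f q := by
    intro p q h1 h2 h3
    exact Nat.find_min hP h2 ⟨p, h1, h3⟩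
  set m := jj - 1 - i with hmdef
  have hjm : jj = i + m + 1 := by omega
  set z : Fin (m + 1) → Z := fun k => f (i + k.val) with hzdef
  have hzinj : Function.Injective z := by
    intro k l h
    have hk : i + (k : ℕ) < jj := by have := k.isLt; omega
    have hl : i + (l : ℕ) < jj := by have := l.isLt; omega
    by_contra hne
    have hne' : (k : ℕ) ≠ l := fun e => hne (Fin.ext e)
    rcases hne'.lt_or_gt with h' | h'
    · exact hjinj _ _ (by omega) hl h
    · exact hjinj _ _ (by omega) hk h.symm
  have hedge : ∀ k : Fin (m + 1), 0 < ζ (z k) (z (k + 1)) := by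
    intro k
    by_cases hk : k = Fin.last m
    · subst hk
      have hlast : (Fin.last m : Fin (m + 1)) + 1 = 0 := by
        simp [Fin.last_add_one]
      rw [hlast]
      have h1 := hf (i + m)
      have h2 : f (i + m + 1) = f i := by rw [← hjm, ← hfij]
      simp only [hzdef, Fin.val_last, Fin.val_zero, Nat.add_zero]
      rw [← h2]
      exact h1
    · have hk' : (k : ℕ) < m := Fin.val_lt_last hk
      have hadd : ((k + 1 : Fin (m + 1)) : ℕ) = (k : ℕ) + 1 := by
        rw [Fin.val_add_one, if_neg hk]
      simp only [hzdef, hadd]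
      have he : i + ((k : ℕ) + 1) = (i + (k : ℕ)) + 1 := by omega
      rw [he]
      exact hf _
  -- the cycle and the minimal weight along it
  set C : Set (Z × Z) := Set.range fun k : Fin (m + 1) => (z k, z (k + 1)) with hCdef
  obtain ⟨j0, -, hj0⟩ := Finset.exists_min_image Finset.univ
    (fun k : Fin (m + 1) => ζ (z k) (z (k + 1))) ⟨0, Finset.mem_univ 0⟩
  set lam := ζ (z j0) (z (j0 + 1)) with hlamdef
  have hlam0 : 0 < lam := hedge j0
  set ζ' : Z → Z → ℝ := fun v w => ζ v w - Set.indicator C (fun _ => lam) (v, w) with hζ'def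
  have hpos' : ∀ v w, 0 ≤ ζ' v w := by
    intro v w
    by_cases h : (v, w) ∈ C
    · simp only [hζ'def, Set.indicator_of_mem h]
      obtain ⟨k, hk⟩ := h
      simp only [Prod.mk.injEq] at hk
      obtain ⟨h1, h2⟩ := hk
      subst h1; subst h2
      have := hj0 k (Finset.mem_univ k)
      linarith
    · simp only [hζ'def, Set.indicator_of_notMem h]
      simpa using hpos v w
  have hbal' : ∀ v, ∑ w, ζ' v w = ∑ w, ζ' w v := by
    intro v
    simp only [hζ'def]
    rw [Finset.sum_sub_distrib, Finset.sum_sub_distrib, hbal, hCdef,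
      sum_indicator_out z hzinj lam v, sum_indicator_in z hzinj lam v]
  have hindnn : ∀ v w, 0 ≤ Set.indicator C (fun _ => lam) (v, w) := by
    intro v w
    exact Set.indicator_nonneg (fun _ _ => le_of_lt hlam0) _
  have hsub : (Finset.univ.filter fun p : Z × Z => 0 < ζ' p.1 p.2) ⊆
      (Finset.univ.filter fun p : Z × Z => 0 < ζ p.1 p.2) := by
    intro p hp
    simp only [Finset.mem_filter, Finset.mem_univ, true_and] at hp ⊢
    have := hindnn p.1 p.2
    simp only [hζ'def] at hp
    linarith
  have hmem : ((z j0, z (j0 + 1)) : Z × Z) ∈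
      (Finset.univ.filter fun p : Z × Z => 0 < ζ p.1 p.2) := by
    simp only [Finset.mem_filter, Finset.mem_univ, true_and]
    exact hedge j0
  have hnmem : ((z j0, z (j0 + 1)) : Z × Z) ∉
      (Finset.univ.filter fun p : Z × Z => 0 < ζ' p.1 p.2) := by
    simp only [Finset.mem_filter, Finset.mem_univ, true_and, not_lt]
    have hmemC : ((z j0, z (j0 + 1)) : Z × Z) ∈ C := ⟨j0, rfl⟩
    simp only [hζ'def, Set.indicator_of_mem hmemC]
    simp [hlamdef]
  have hlt : (Finset.univ.filter fun p : Z × Z => 0 < ζ' p.1 p.2).card < n := by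
    rw [← hcard]
    exact Finset.card_lt_card
      ((Finset.ssubset_iff_of_subset hsub).mpr ⟨_, hmem, hnmem⟩)
  obtain ⟨J, C', lam', hC', hlam', heq'⟩ := IH _ hlt ζ' hpos' hbal' rfl
  refine ⟨J + 1, Fin.cons C C', Fin.cons lam lam', ?_, ?_, ?_⟩
  · intro k
    refine Fin.cases ?_ (fun k => hC' k) k
    exact ⟨m, z, hzinj, hCdef⟩
  · intro k
    refine Fin.cases ?_ (fun k => hlam' k) k
    exact le_of_lt hlam0
  · intro v w
    rw [Fin.sum_univ_succ]
    simp only [Fin.cons_zero, Fin.cons_succ]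
    rw [← heq' v w]
    simp only [hζ'def]
    ring
end

section
/- Let Θ be a finite nonempty set and q ∈ Δ(Θ). For every q' ∈ Δ(Θ) define S(q | q') as the smallest ε ∈ [0,1] for which there exists p ∈ Δ(Θ) with q = (1 − ε)·q' + ε·p. Then for every integer K ≥ 1 there exists a (1/K)-divisible q_K ∈ Δ(Θ), i.e., K·q_K(θ) ∈ ℕ for every θ, such that ‖q_K − q‖ ≤ (|Θ| − 1)/K and S(q | q_K) ≤ (|Θ| − 1)·|Θ|/K. -/
open Finset

/-- `S(q | q')`: the smallest `ε ∈ [0,1]` for which there exists a probability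
vector `p` with `q = (1 − ε)·q' + ε·p`. -/
noncomputable def Smix {Θ : Type*} [Fintype Θ] (q q' : Θ → ℝ) : ℝ :=
  sInf {ε : ℝ | 0 ≤ ε ∧ ε ≤ 1 ∧
    ∃ p : Θ → ℝ, IsProbVec p ∧ ∀ θ, q θ = (1 - ε) * q' θ + ε * p θ}

/-- Discrete approximation. Every `q ∈ Δ(Θ)` admits a
`(1/K)`-divisible approximation `q_K` with `‖q_K − q‖ ≤ (|Θ| − 1)/K` and
`S(q | q_K) ≤ (|Θ| − 1)·|Θ|/K`. -/
theorem discrete_approximation {Θ : Type*} [Fintype Θ] [Nonempty Θ]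
    (q : Θ → ℝ) (hq : IsProbVec q) (K : ℕ) (hK : 1 ≤ K) :
    ∃ qK : Θ → ℝ, IsProbVec qK ∧
      (∀ θ, ∃ n : ℕ, (K : ℝ) * qK θ = n) ∧
      tv qK q ≤ ((Fintype.card Θ : ℝ) - 1) / K ∧
      Smix q qK ≤ ((Fintype.card Θ : ℝ) - 1) * (Fintype.card Θ : ℝ) / K := by
  classical
  have hK0 : (0:ℝ) < K := by exact_mod_cast Nat.lt_of_lt_of_le Nat.zero_lt_one hK
  set N := Fintype.card Θ with hNdef
  have hN1 : 1 ≤ N := Fintype.card_pos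
  obtain ⟨θ₀, -, hθ₀⟩ := Finset.exists_max_image Finset.univ q univ_nonempty
  have hθ₀' : ∀ θ, q θ ≤ q θ₀ := fun θ => hθ₀ θ (mem_univ θ)
  -- q θ₀ ≥ 1/N
  have hqmax : 1 ≤ (N:ℝ) * q θ₀ := by
    have : (1:ℝ) = ∑ θ, q θ := hq.2.symm
    rw [this]
    calc ∑ θ, q θ ≤ ∑ _θ : Θ, q θ₀ := Finset.sum_le_sum fun θ _ => hθ₀' θ
      _ = (N:ℝ) * q θ₀ := by rw [Finset.sum_const, card_univ, nsmul_eq_mul]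
  set m : Θ → ℤ := fun θ => ⌊(K:ℝ) * q θ⌋ with hmdef
  have hm0 : ∀ θ, 0 ≤ m θ := fun θ =>
    Int.floor_nonneg.2 (mul_nonneg hK0.le (hq.1 θ))
  have hmle : ∀ θ, (m θ : ℝ) ≤ (K:ℝ) * q θ := fun θ => Int.floor_le _
  have hmlt : ∀ θ, (K:ℝ) * q θ < m θ + 1 := fun θ => Int.lt_floor_add_one _
  set r : ℤ := K - ∑ θ, m θ with hrdef
  have hrsum : (r : ℝ) = ∑ θ, ((K:ℝ) * q θ - m θ) := by
    rw [Finset.sum_sub_distrib, ← Finset.mul_sum, hq.2, mul_one, hrdef]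
    push_cast
    ring
  have hr0 : (0:ℝ) ≤ (r:ℝ) := by
    rw [hrsum]
    exact Finset.sum_nonneg fun θ _ => sub_nonneg.2 (hmle θ)
  have hrltN : (r:ℝ) < N := by
    rw [hrsum]
    have h := Finset.sum_lt_sum_of_nonempty (s := (Finset.univ : Finset Θ))
      (f := fun θ => (K:ℝ) * q θ - (m θ : ℝ)) (g := fun _ => (1:ℝ))
      univ_nonempty (fun θ _ => by linarith [hmlt θ])
    simpa [card_univ] using h
  have hrle : (r:ℝ) ≤ (N:ℝ) - 1 := by
    have h1 : r < (N:ℤ) := by exact_mod_cast hrltN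
    have h2 : r ≤ (N:ℤ) - 1 := by omega
    calc (r:ℝ) ≤ ((N:ℤ) - 1 : ℤ) := by exact_mod_cast h2
      _ = (N:ℝ) - 1 := by push_cast; ring
  set qK : Θ → ℝ := fun θ => ((m θ : ℝ) + if θ = θ₀ then (r:ℝ) else 0) / K with hqKdef
  have hqK0 : ∀ θ, 0 ≤ qK θ := by
    intro θ
    apply div_nonneg _ hK0.le
    have : (0:ℝ) ≤ (m θ : ℝ) := by exact_mod_cast hm0 θ
    split <;> linarith
  have hqKsum : ∑ θ, qK θ = 1 := by
    rw [hqKdef]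
    rw [← Finset.sum_div]
    rw [Finset.sum_add_distrib, Finset.sum_ite_eq' Finset.univ θ₀ (fun _ => (r:ℝ)),
      if_pos (mem_univ θ₀)]
    rw [div_eq_one_iff_eq hK0.ne']
    have : ((∑ θ, m θ : ℤ) : ℝ) + (r:ℝ) = (K:ℝ) := by
      rw [hrdef]; push_cast; ring
    push_cast at this ⊢
    linarith
  -- key pointwise facts
  have hqKne : ∀ θ, θ ≠ θ₀ → qK θ ≤ q θ := by
    intro θ hθ
    have hv : qK θ = (m θ : ℝ) / K := by simp [hqKdef, hθ]
    rw [hv, div_le_iff₀ hK0]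
    linarith [hmle θ]
  have hfrac0 : (m θ₀ : ℝ) ≤ (K:ℝ) * q θ₀ := hmle θ₀
  have hq0val : qK θ₀ = ((m θ₀ : ℝ) + (r:ℝ)) / K := by simp [hqKdef]
  have hkeyr : (K:ℝ) * q θ₀ - (m θ₀ : ℝ) ≤ (r:ℝ) := by
    rw [hrsum]
    have h := Finset.single_le_sum (f := fun θ => (K:ℝ) * q θ - (m θ : ℝ))
      (fun θ _ => sub_nonneg.2 (hmle θ)) (mem_univ θ₀)
    simpa using h
  have hqK_q0 : q θ₀ ≤ qK θ₀ := by
    rw [hq0val, le_div_iff₀ hK0]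
    linarith
  have hqK_q0' : qK θ₀ - q θ₀ ≤ ((N:ℝ) - 1) / K := by
    have h : qK θ₀ - q θ₀ = ((m θ₀:ℝ) + r - K * q θ₀) / K := by
      rw [hq0val]; field_simp
    rw [h, div_le_div_iff₀ hK0 hK0]
    nlinarith [hrle, hK0, hfrac0]
  refine ⟨qK, ⟨hqK0, hqKsum⟩, ?_, ?_, ?_⟩
  · -- divisibility
    intro θ
    refine ⟨(m θ + if θ = θ₀ then r else 0).toNat, ?_⟩
    have hnn : 0 ≤ m θ + if θ = θ₀ then r else 0 := by
      have h0r : (0:ℤ) ≤ r := by exact_mod_cast hr0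
      have := hm0 θ
      split <;> omega
    have hcast : (((m θ + if θ = θ₀ then r else 0).toNat : ℕ) : ℝ)
        = ((m θ : ℝ) + if θ = θ₀ then (r:ℝ) else 0) := by
      rw [← Int.cast_natCast, Int.toNat_of_nonneg hnn]
      push_cast [apply_ite (fun z : ℤ => (z : ℝ))]
      ring
    rw [hcast]
    have hv : qK θ = ((m θ : ℝ) + if θ = θ₀ then (r:ℝ) else 0) / K := rfl
    rw [hv]
    field_simp
  · -- tv bound
    have htot : ∑ θ, (q θ - qK θ) = 0 := by
      rw [Finset.sum_sub_distrib, hq.2, hqKsum]; ring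
    have herase_eq : ∑ θ ∈ Finset.univ.erase θ₀, (q θ - qK θ) = qK θ₀ - q θ₀ := by
      have h := Finset.sum_erase_add Finset.univ (fun θ => q θ - qK θ) (mem_univ θ₀)
      linarith [h.symm ▸ htot]
    have habs : ∑ θ, |qK θ - q θ| = 2 * (qK θ₀ - q θ₀) := by
      rw [← Finset.sum_erase_add Finset.univ _ (mem_univ θ₀)]
      have h1 : ∑ θ ∈ Finset.univ.erase θ₀, |qK θ - q θ|
          = ∑ θ ∈ Finset.univ.erase θ₀, (q θ - qK θ) := by
        apply Finset.sum_congr rfl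
        intro θ hθ
        have hne : θ ≠ θ₀ := Finset.ne_of_mem_erase hθ
        rw [abs_of_nonpos (by linarith [hqKne θ hne])]
        ring
      rw [h1, herase_eq, abs_of_nonneg (by linarith [hqK_q0])]
      ring
    rw [tv, habs]
    linarith [hqK_q0']
  · -- Smix bound
    set ε₀ : ℝ := ((N:ℝ) - 1) * (N:ℝ) / K with hε₀def
    have hbdd : BddBelow {ε : ℝ | 0 ≤ ε ∧ ε ≤ 1 ∧
        ∃ p : Θ → ℝ, IsProbVec p ∧ ∀ θ, q θ = (1 - ε) * qK θ + ε * p θ} :=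
      ⟨0, fun x hx => hx.1⟩
    by_cases h1 : 1 ≤ ε₀
    · have mem1 : (1:ℝ) ∈ {ε : ℝ | 0 ≤ ε ∧ ε ≤ 1 ∧
          ∃ p : Θ → ℝ, IsProbVec p ∧ ∀ θ, q θ = (1 - ε) * qK θ + ε * p θ} :=
        ⟨zero_le_one, le_refl 1, q, hq, fun θ => by ring⟩
      exact le_trans (csInf_le hbdd mem1) h1
    · push_neg at h1
      by_cases hNone : N = 1
      · -- singleton case: qK = q, take ε = 0
        obtain ⟨x, hx⟩ := Fintype.card_eq_one_iff.mp hNone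
        have huniv : (Finset.univ : Finset Θ) = {x} := by
          apply Finset.eq_singleton_iff_unique_mem.mpr
          exact ⟨mem_univ x, fun y _ => hx y⟩
        have hqx : q x = 1 := by
          have := hq.2; rw [huniv, Finset.sum_singleton] at this; exact this
        have hqKx : qK x = 1 := by
          have := hqKsum; rw [huniv, Finset.sum_singleton] at this; exact this
        have heq : ∀ θ, q θ = qK θ := by intro θ; rw [hx θ, hqx, hqKx]
        have mem0 : (0:ℝ) ∈ {ε : ℝ | 0 ≤ ε ∧ ε ≤ 1 ∧
            ∃ p : Θ → ℝ, IsProbVec p ∧ ∀ θ, q θ = (1 - ε) * qK θ + ε * p θ} :=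
          ⟨le_refl 0, zero_le_one, q, hq, fun θ => by rw [heq θ]; ring⟩
        have h0 : Smix q qK ≤ 0 := csInf_le hbdd mem0
        have : (0:ℝ) ≤ ε₀ := by
          rw [hε₀def, hNone]; norm_num
        linarith
      · have hN2 : 2 ≤ N := by omega
        have hN2' : (2:ℝ) ≤ (N:ℝ) := by exact_mod_cast hN2
        have hε₀pos : 0 < ε₀ := by
          rw [hε₀def]
          apply div_pos _ hK0
          nlinarith
        set p : Θ → ℝ := fun θ => (q θ - (1 - ε₀) * qK θ) / ε₀ with hpdef
        have hp0 : ∀ θ, 0 ≤ p θ := by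
          intro θ
          apply div_nonneg _ hε₀pos.le
          by_cases hθ : θ = θ₀
          · subst hθ
            have h1N : 1 ≤ (N:ℝ) * q θ := hqmax
            have hkey : ((N:ℝ) - 1) / K ≤ ε₀ * q θ := by
              rw [hε₀def, div_mul_eq_mul_div, div_le_div_iff₀ hK0 hK0]
              have hfac : ((N:ℝ) - 1) ≤ ((N:ℝ) - 1) * ((N:ℝ) * q θ) :=
                le_mul_of_one_le_right (by linarith) h1N
              nlinarith [hfac, hK0]
            have := hqK_q0'
            have := hqK_q0
            nlinarith
          · have h2 := hqKne θ hθ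
            have h3 := hqK0 θ
            nlinarith
        have hpsum : ∑ θ, p θ = 1 := by
          rw [hpdef]
          simp only
          rw [← Finset.sum_div, Finset.sum_sub_distrib, ← Finset.mul_sum, hq.2, hqKsum]
          field_simp
          ring
        have hpeq : ∀ θ, q θ = (1 - ε₀) * qK θ + ε₀ * p θ := by
          intro θ
          rw [hpdef]
          field_simp
          ring
        have memε : ε₀ ∈ {ε : ℝ | 0 ≤ ε ∧ ε ≤ 1 ∧
            ∃ p : Θ → ℝ, IsProbVec p ∧ ∀ θ, q θ = (1 - ε) * qK θ + ε * p θ} :=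
          ⟨hε₀pos.le, h1.le, p, ⟨hp0, hpsum⟩, hpeq⟩
        exact csInf_le hbdd memε
end
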